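/- arXiv:1310.3746 — 5 statements merged into one kernel-verified Lean document; each statement's English description precedes it below -/
import Mathlib

section
/- Let A be a finite subgroup of SU(3) all of whose elements are diagonal matrices, and suppose A is invariant under conjugation by E, i.e. E A E⁻¹ = A. Then there exist positive integers m and n with n dividing m, and an integer k with 0 ≤ k ≤ r−1 where r = m/n, such that, setting ε = exp(2πi/m), the matrices F = diag(ε, ε^k, ε^{−k−1}) and G = diag(1, ε^{−r}, ε^{r}) belong to A and together generate A; moreover A is isomorphic to ℤ_m × ℤ_n. -/
open Matrix Complex

noncomputable section

/-- The group `SU(3)`: 3×3 complex unitary matrices of determinant 1. -/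
abbrev SU3 : Type := ↥(Matrix.specialUnitaryGroup (Fin 3) ℂ)

noncomputable instance : Group SU3 :=
  { (inferInstance : Monoid SU3) with
    inv := fun A => ⟨star A.val,
      ⟨Unitary.star_mem A.2.1, by
        have h2 : A.val.det = 1 := A.2.2
        show Matrix.detMonoidHom (star A.val) = 1
        show (star A.val).det = 1
        rw [Matrix.star_eq_conjTranspose, Matrix.det_conjTranspose, h2, star_one]⟩⟩
    inv_mul_cancel := fun A => Subtype.ext A.2.1.1 }

/-- The matrix `E` with rows (0,1,0), (0,0,1), (1,0,0). -/
def EM : Matrix (Fin 3) (Fin 3) ℂ := !![0, 1, 0; 0, 0, 1; 1, 0, 0]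

/-- The matrix `B` with rows (-1,0,0), (0,0,-1), (0,-1,0). -/
def BM : Matrix (Fin 3) (Fin 3) ℂ := !![-1, 0, 0; 0, 0, -1; 0, -1, 0]

/-- `ε = exp(2πi/m)`. -/
def eps (m : ℕ) : ℂ := Complex.exp (2 * Real.pi * Complex.I / m)

/-- The diagonal matrix `F = diag(ε, ε^k, ε^(-k-1))` with `ε = exp(2πi/m)`. -/
def FM (m : ℕ) (k : ℤ) : Matrix (Fin 3) (Fin 3) ℂ :=
  Matrix.diagonal ![eps m, eps m ^ k, eps m ^ (-k - 1)]

/-- The diagonal matrix `G = diag(1, ε^(-r), ε^r)` with `ε = exp(2πi/m)`. -/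
def GM (m r : ℕ) : Matrix (Fin 3) (Fin 3) ℂ :=
  Matrix.diagonal ![1, eps m ^ (-(r : ℤ)), eps m ^ (r : ℤ)]

/-- auxiliary: conjugating a diagonal matrix by `EM` cyclically permutes the entries. -/
lemma EM_conj_diag (dv : Fin 3 → ℂ) :
    EM * Matrix.diagonal dv * star EM = Matrix.diagonal ![dv 1, dv 2, dv 0] := by
  ext i j
  fin_cases i <;> fin_cases j <;>
    simp [EM, Matrix.mul_apply, Matrix.vecMul, dotProduct, Fin.sum_univ_three,
      Matrix.diagonal_apply, Matrix.star_apply]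

lemma aux_pow_mod {M : Type*} [Monoid M] {x : M} {m : ℕ} (h : x ^ m = 1) (j : ℕ) :
    x ^ (j % m) = x ^ j := by
  conv_rhs => rw [← Nat.mod_add_div j m]
  rw [pow_add, pow_mul, h, one_pow, mul_one]

lemma aux_zpow_mod {G : Type*} [Group G] {x : G} {m : ℕ} (h : x ^ m = 1) (t : ℤ) :
    x ^ (t % (m : ℤ)) = x ^ t := by
  conv_rhs => rw [← Int.emod_add_mul_ediv t m]
  rw [_root_.zpow_add, _root_.zpow_mul, zpow_natCast, h, _root_.one_zpow, mul_one]

lemma aux_zmod_pow {G : Type*} [Group G] {x : G} {n : ℕ} [NeZero n] (h : x ^ n = 1) (t : ℤ) :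
    x ^ ((t : ZMod n).val) = x ^ t := by
  have : (((t : ZMod n).val : ℤ)) = t % n := ZMod.val_intCast t
  rw [← zpow_natCast, this, aux_zpow_mod h]

theorem statement0 (A : Subgroup SU3) (hfin : Finite A)
    (hdiag : ∀ a ∈ A, ((a : Matrix (Fin 3) (Fin 3) ℂ)).IsDiag)
    (E : SU3) (hE : (E : Matrix (Fin 3) (Fin 3) ℂ) = EM)
    (hconj : (fun a => E * a * E⁻¹) '' (A : Set SU3) = (A : Set SU3)) :
    ∃ m n : ℕ, 0 < m ∧ 0 < n ∧ n ∣ m ∧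
      ∃ k : ℤ, 0 ≤ k ∧ k ≤ ((m / n : ℕ) : ℤ) - 1 ∧
        ∃ F G : SU3,
          (F : Matrix (Fin 3) (Fin 3) ℂ) = FM m k ∧
          (G : Matrix (Fin 3) (Fin 3) ℂ) = GM m (m / n) ∧
          F ∈ A ∧ G ∈ A ∧ Subgroup.closure {F, G} = A ∧
          Nonempty (A ≃* Multiplicative (ZMod m) × Multiplicative (ZMod n)) := by
  classical
  haveI : Finite ↥A := hfin
  set d : ↥A → Fin 3 → ℂ := fun a i => ((a : SU3) : Matrix (Fin 3) (Fin 3) ℂ) i i with hd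
  -- every element of A is the diagonal matrix of its diagonal entries
  have hdg : ∀ a : ↥A, ((a : SU3) : Matrix (Fin 3) (Fin 3) ℂ) = Matrix.diagonal (d a) :=
    fun a => ((hdiag a a.2).diagonal_diag).symm
  have hd1 : ∀ i, d 1 i = 1 := by
    intro i
    show (1 : Matrix (Fin 3) (Fin 3) ℂ) i i = 1
    simp
  have hdmul : ∀ (a b : ↥A) (i : Fin 3), d (a * b) i = d a i * d b i := by
    intro a b i
    show (((a : SU3) : Matrix (Fin 3) (Fin 3) ℂ) * ((b : SU3) : Matrix (Fin 3) (Fin 3) ℂ)) i i = _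
    rw [hdg a, Matrix.diagonal_mul]
  have hdet : ∀ a : ↥A, d a 0 * d a 1 * d a 2 = 1 := by
    intro a
    have h1 : (((a : SU3) : Matrix (Fin 3) (Fin 3) ℂ)).det = 1 := (a : SU3).2.2
    rw [hdg a, Matrix.det_diagonal, Fin.prod_univ_three] at h1
    exact h1
  have hunit : ∀ (a : ↥A) (i : Fin 3), d a i * d a⁻¹ i = 1 := by
    intro a i
    rw [← hdmul, mul_inv_cancel, hd1]
  have hne : ∀ (a : ↥A) (i : Fin 3), d a i ≠ 0 :=
    fun a i => left_ne_zero_of_mul_eq_one (hunit a i)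
  have hinj : ∀ a b : ↥A, d a 0 = d b 0 → d a 1 = d b 1 → a = b := by
    intro a b h0 h1
    have h2 : d a 2 = d b 2 := by
      have ha := hdet a
      have hb := hdet b
      rw [h0, h1] at ha
      exact mul_left_cancel₀ (mul_ne_zero (hne b 0) (hne b 1)) (ha.trans hb.symm)
    apply Subtype.ext
    apply Subtype.ext
    have : ((a : SU3) : Matrix (Fin 3) (Fin 3) ℂ) = ((b : SU3) : Matrix (Fin 3) (Fin 3) ℂ) := by
      rw [hdg a, hdg b]
      have : d a = d b := funext fun i => by
        fin_cases i
        · exact h0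
        · exact h1
        · exact h2
      rw [this]
    exact this
  -- the two projections, as homomorphisms into ℂˣ
  let p₁ : ↥A →* ℂˣ := MonoidHom.mk' (fun a => Units.mk0 (d a 0) (hne a 0)) (by
    intro a b; apply Units.ext; simp [hdmul])
  let p₂ : ↥A →* ℂˣ := MonoidHom.mk' (fun a => Units.mk0 (d a 1) (hne a 1)) (by
    intro a b; apply Units.ext; simp [hdmul])
  have hp₁ : ∀ a : ↥A, (p₁ a : ℂ) = d a 0 := fun a => rfl
  have hp₂ : ∀ a : ↥A, (p₂ a : ℂ) = d a 1 := fun a => rfl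
  have hinjU : ∀ a b : ↥A, p₁ a = p₁ b → p₂ a = p₂ b → a = b := by
    intro a b h1 h2
    exact hinj a b (congrArg Units.val h1) (congrArg Units.val h2)
  -- invariance under the cyclic shift
  have hsig : ∀ a : ↥A, ∃ b : ↥A, p₁ b = p₂ a := by
    intro a
    have hmem : E * (a : SU3) * E⁻¹ ∈ A := by
      have : E * (a : SU3) * E⁻¹ ∈ ((fun a => E * a * E⁻¹) '' (A : Set SU3)) :=
        ⟨a, a.2, rfl⟩
      rwa [hconj] at this
    refine ⟨⟨_, hmem⟩, ?_⟩
    apply Units.ext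
    have hEinv : ((E⁻¹ : SU3) : Matrix (Fin 3) (Fin 3) ℂ) = star EM := by
      rw [← hE]; rfl
    show ((E * (a : SU3) * E⁻¹ : SU3) : Matrix (Fin 3) (Fin 3) ℂ) 0 0 = d a 1
    have hval : ((E * (a : SU3) * E⁻¹ : SU3) : Matrix (Fin 3) (Fin 3) ℂ)
        = EM * Matrix.diagonal (d a) * star EM := by
      show ((E : SU3) : Matrix (Fin 3) (Fin 3) ℂ) * ((a : SU3) : Matrix (Fin 3) (Fin 3) ℂ) *
          ((E⁻¹ : SU3) : Matrix (Fin 3) (Fin 3) ℂ) = _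
      rw [hE, hEinv, hdg a]
    rw [hval, EM_conj_diag]
    simp
  -- the image of the first projection has order m
  have hNonA : Nonempty ↥A := ⟨1⟩
  haveI : Finite ↥p₁.range := inferInstanceAs (Finite ↑(Set.range ⇑p₁))
  haveI : Nonempty ↥p₁.range := ⟨1⟩
  set m : ℕ := Nat.card p₁.range with hm
  have hm0 : 0 < m := Nat.card_pos
  haveI : NeZero m := ⟨hm0.ne'⟩
  have hpow_m : ∀ a : ↥A, p₁ a ^ m = 1 := by
    intro a
    have h1 : (⟨p₁ a, ⟨a, rfl⟩⟩ : p₁.range) ^ m = 1 := pow_card_eq_one'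
    have h2 := congrArg (Subtype.val) h1
    simpa using h2
  have hpow_m2 : ∀ a : ↥A, p₂ a ^ m = 1 := by
    intro a
    obtain ⟨b, hb⟩ := hsig a
    rw [← hb]; exact hpow_m b
  have hprim : IsPrimitiveRoot (eps m) m := by
    have := Complex.isPrimitiveRoot_exp m hm0.ne'
    rw [eps]
    exact this
  have he0 : eps m ≠ 0 := Complex.exp_ne_zero _
  set εu : ℂˣ := Units.mk0 (eps m) he0 with hεu
  have hεum : εu ^ m = 1 := by
    apply Units.ext
    simpa [hεu] using hprim.pow_eq_one
  have hPle : p₁.range ≤ rootsOfUnity m ℂ := by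
    rintro x ⟨a, rfl⟩
    rw [_root_.mem_rootsOfUnity]
    exact hpow_m a
  haveI : Finite ↑((rootsOfUnity m ℂ : Subgroup ℂˣ) : Set ℂˣ) :=
    inferInstanceAs (Finite ↥(rootsOfUnity m ℂ))
  have hPeq : p₁.range = rootsOfUnity m ℂ := by
    apply SetLike.coe_injective
    refine Set.eq_of_subset_of_ncard_le hPle ?_ (Set.toFinite _)
    have h1 : ((rootsOfUnity m ℂ : Subgroup ℂˣ) : Set ℂˣ).ncard = m := by
      rw [← Nat.card_coe_set_eq, SetLike.coe_sort_coe,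
        Complex.card_rootsOfUnity]
    have h2 : ((p₁.range : Subgroup ℂˣ) : Set ℂˣ).ncard = m := by
      rw [← Nat.card_coe_set_eq, SetLike.coe_sort_coe]
    exact le_of_eq (h1.trans h2.symm)
  have hεmem : εu ∈ p₁.range := by
    rw [hPeq, _root_.mem_rootsOfUnity]; exact hεum
  obtain ⟨F₀, hF₀⟩ := hεmem
  -- the kernel
  haveI : Finite ↥p₁.ker := inferInstance
  haveI : Nonempty ↥p₁.ker := ⟨1⟩
  set n : ℕ := Nat.card p₁.ker with hn
  have hn0 : 0 < n := Nat.card_pos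
  haveI : NeZero n := ⟨hn0.ne'⟩
  set q : ↥p₁.ker →* ℂˣ := p₂.comp p₁.ker.subtype with hqdef
  have hqinj : Function.Injective q := by
    intro a b hab
    apply Subtype.ext
    apply hinjU
    · rw [MonoidHom.mem_ker.mp a.2, MonoidHom.mem_ker.mp b.2]
    · exact hab
  have hqcard : Nat.card q.range = n := by
    rw [hn]
    exact (Nat.card_congr (MonoidHom.ofInjective hqinj).toEquiv).symm
  have hQle : q.range ≤ rootsOfUnity m ℂ := by
    rintro x ⟨a, rfl⟩
    rw [_root_.mem_rootsOfUnity]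
    exact hpow_m2 _
  have hndvd : n ∣ m := by
    have h1 := Subgroup.card_dvd_of_le hQle
    rw [hqcard] at h1
    rwa [Complex.card_rootsOfUnity] at h1
  set r : ℕ := m / n with hrdef
  have hrn : r * n = m := Nat.div_mul_cancel hndvd
  have hr0 : 0 < r := Nat.div_pos (Nat.le_of_dvd hm0 hndvd) hn0
  have hQle_n : q.range ≤ rootsOfUnity n ℂ := by
    rintro x ⟨a, rfl⟩
    rw [_root_.mem_rootsOfUnity, ← map_pow]
    rw [pow_card_eq_one']
    exact map_one q
  haveI : Finite ↑((rootsOfUnity n ℂ : Subgroup ℂˣ) : Set ℂˣ) :=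
    inferInstanceAs (Finite ↥(rootsOfUnity n ℂ))
  haveI : Finite ↥q.range := inferInstanceAs (Finite ↑(Set.range ⇑q))
  have hQeq : q.range = rootsOfUnity n ℂ := by
    apply SetLike.coe_injective
    refine Set.eq_of_subset_of_ncard_le hQle_n ?_ (Set.toFinite _)
    have h1 : ((rootsOfUnity n ℂ : Subgroup ℂˣ) : Set ℂˣ).ncard = n := by
      rw [← Nat.card_coe_set_eq, SetLike.coe_sort_coe,
        Complex.card_rootsOfUnity]
    have h2 : ((q.range : Subgroup ℂˣ) : Set ℂˣ).ncard = n := by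
      rw [← Nat.card_coe_set_eq, SetLike.coe_sort_coe]
      exact hqcard
    exact le_of_eq (h1.trans h2.symm)
  have hGmem : (εu ^ r)⁻¹ ∈ q.range := by
    rw [hQeq, _root_.mem_rootsOfUnity, inv_pow, ← pow_mul, hrn, hεum, inv_one]
  obtain ⟨g, hg⟩ := hGmem
  set G' : ↥A := p₁.ker.subtype g with hG'
  have hG1 : p₁ G' = 1 := MonoidHom.mem_ker.mp g.2
  have hG2 : p₂ G' = (εu ^ r)⁻¹ := hg
  -- entries of G'
  have hdG0 : d G' 0 = 1 := congrArg Units.val hG1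
  have hdG1 : d G' 1 = (eps m ^ r)⁻¹ := by
    have h := congrArg Units.val hG2
    rw [Units.val_inv_eq_inv_val, Units.val_pow_eq_pow_val] at h
    exact h
  have hdG2 : d G' 2 = eps m ^ r := by
    have h := hdet G'
    rw [hdG0, hdG1, one_mul] at h
    have hx : eps m ^ r ≠ 0 := pow_ne_zero _ he0
    field_simp at h
    exact h
  have hGmat : ((G' : SU3) : Matrix (Fin 3) (Fin 3) ℂ) = GM m r := by
    rw [hdg G', GM]
    apply congrArg Matrix.diagonal
    funext i
    fin_cases i
    · exact hdG0
    · show d G' 1 = eps m ^ (-(r : ℤ))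
      rw [_root_.zpow_neg, _root_.zpow_natCast]
      exact hdG1
    · show d G' 2 = eps m ^ ((r : ℤ))
      rw [_root_.zpow_natCast]
      exact hdG2
  -- entries of F₀ and the corrected generator F
  have hdF₀0 : d F₀ 0 = eps m := congrArg Units.val hF₀
  have hpm2C : ((p₂ F₀ : ℂˣ) : ℂ) ^ m = 1 := by
    have h := congrArg Units.val (hpow_m2 F₀)
    rw [Units.val_pow_eq_pow_val] at h
    exact h
  obtain ⟨i0, hi0lt, hi0⟩ : ∃ i < m, eps m ^ i = ((p₂ F₀ : ℂˣ) : ℂ) :=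
    hprim.eq_pow_of_pow_eq_one hpm2C
  have hiu : εu ^ (i0 : ℤ) = p₂ F₀ := by
    apply Units.ext
    rw [Units.val_zpow_eq_zpow_val]
    rw [show ((εu : ℂˣ) : ℂ) = eps m from rfl, _root_.zpow_natCast]
    exact hi0
  set k : ℤ := (i0 : ℤ) % (r : ℤ) with hkdef
  set t0 : ℤ := (i0 : ℤ) / (r : ℤ) with ht0def
  have hkt : (i0 : ℤ) - (r : ℤ) * t0 = k := by
    rw [hkdef, ht0def, Int.emod_def]
  set F : ↥A := F₀ * G' ^ t0 with hF
  have hpF1 : p₁ F = εu := by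
    rw [hF, _root_.map_mul, _root_.map_zpow, hG1, _root_.one_zpow, mul_one, hF₀]
  have hpF2 : p₂ F = εu ^ k := by
    rw [hF, _root_.map_mul, _root_.map_zpow, hG2, ← hiu]
    rw [← _root_.zpow_natCast εu r, ← _root_.zpow_neg, ← _root_.zpow_mul]
    rw [← _root_.zpow_add]
    rw [show (i0 : ℤ) + -(r : ℤ) * t0 = k from by rw [← hkt]; ring]
  have hdF0 : d F 0 = eps m := congrArg Units.val hpF1
  have hdF1 : d F 1 = eps m ^ k := by
    have h := congrArg Units.val hpF2
    rw [Units.val_zpow_eq_zpow_val] at h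
    exact h
  have hdF2 : d F 2 = eps m ^ (-k - 1) := by
    have h := hdet F
    rw [hdF0, hdF1] at h
    have hy : eps m * eps m ^ k ≠ 0 := mul_ne_zero he0 (zpow_ne_zero _ he0)
    have hx : eps m * eps m ^ k * eps m ^ (-k - 1) = 1 := by
      rw [mul_assoc, ← zpow_add₀ he0]
      have : k + (-k - 1) = -1 := by ring
      rw [this, _root_.zpow_neg, zpow_one]
      exact mul_inv_cancel₀ he0
    exact mul_left_cancel₀ hy (h.trans hx.symm)
  have hFmat : ((F : SU3) : Matrix (Fin 3) (Fin 3) ℂ) = FM m k := by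
    rw [hdg F, FM]
    apply congrArg Matrix.diagonal
    funext i
    fin_cases i
    · exact hdF0
    · exact hdF1
    · exact hdF2
  -- bounds for k
  have hrz : (r : ℤ) ≠ 0 := by exact_mod_cast hr0.ne'
  have hk0 : 0 ≤ k := Int.emod_nonneg _ hrz
  have hklt : k < (r : ℤ) := Int.emod_lt_of_pos _ (by exact_mod_cast hr0)
  have hk1 : k ≤ (r : ℤ) - 1 := by omega
  -- orders of F and G'
  have hFm : F ^ m = 1 := by
    apply hinjU
    · rw [_root_.map_pow, hpF1, hεum, _root_.map_one]
    · rw [_root_.map_pow, hpF2, _root_.map_one, ← _root_.zpow_natCast (εu ^ k),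
        ← _root_.zpow_mul, mul_comm k (m : ℤ), _root_.zpow_mul, _root_.zpow_natCast,
        hεum, _root_.one_zpow]
  have hGn : G' ^ n = 1 := by
    apply hinjU
    · rw [_root_.map_pow, hG1, one_pow, _root_.map_one]
    · rw [_root_.map_pow, hG2, _root_.map_one, inv_pow, ← pow_mul, hrn, hεum, inv_one]
  -- cardinality of A
  have hcardA : Nat.card ↥A = m * n := by
    rw [Subgroup.card_eq_card_quotient_mul_card_subgroup p₁.ker]
    congr 1
    rw [hm]
    exact Nat.card_congr (QuotientGroup.quotientKerEquivRange p₁).toEquiv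
  -- commutativity
  have hcomm : ∀ a b : ↥A, a * b = b * a := by
    intro a b
    apply hinjU
    · rw [_root_.map_mul, _root_.map_mul, mul_comm]
    · rw [_root_.map_mul, _root_.map_mul, mul_comm]
  -- the homomorphism from ZMod m × ZMod n
  let f : Multiplicative (ZMod m) × Multiplicative (ZMod n) →* ↥A :=
    MonoidHom.mk' (fun x => F ^ ((Multiplicative.toAdd x.1).val) *
        G' ^ ((Multiplicative.toAdd x.2).val)) (by
      rintro ⟨x1, x2⟩ ⟨y1, y2⟩
      show F ^ ((Multiplicative.toAdd x1 + Multiplicative.toAdd y1).val) *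
          G' ^ ((Multiplicative.toAdd x2 + Multiplicative.toAdd y2).val) = _
      rw [ZMod.val_add, ZMod.val_add, aux_pow_mod hFm, aux_pow_mod hGn, pow_add, pow_add]
      rw [mul_assoc, mul_assoc]
      congr 1
      rw [← mul_assoc, ← mul_assoc]
      congr 1
      exact hcomm _ _)
  have hfval : ∀ x1 x2, f (x1, x2) = F ^ ((Multiplicative.toAdd x1).val) *
      G' ^ ((Multiplicative.toAdd x2).val) := fun _ _ => rfl
  -- surjectivity
  have hsurj : Function.Surjective f := by
    intro a
    have hpaC : ((p₁ a : ℂˣ) : ℂ) ^ m = 1 := by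
      have h := congrArg Units.val (hpow_m a)
      rw [Units.val_pow_eq_pow_val] at h
      exact h
    obtain ⟨i1, hi1lt, hi1⟩ : ∃ i < m, eps m ^ i = ((p₁ a : ℂˣ) : ℂ) :=
      hprim.eq_pow_of_pow_eq_one hpaC
    have hia : εu ^ i1 = p₁ a := by
      apply Units.ext
      rw [Units.val_pow_eq_pow_val]
      exact hi1
    set b : ↥A := (F ^ i1)⁻¹ * a with hb
    have hbker : p₁ b = 1 := by
      rw [hb, _root_.map_mul, map_inv, _root_.map_pow, hpF1, hia]
      exact inv_mul_cancel _
    have hbq : p₂ b ∈ q.range := ⟨⟨b, MonoidHom.mem_ker.mpr hbker⟩, rfl⟩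
    -- p₂ b is a power of εu ^ r
    obtain ⟨j, hj⟩ : ∃ j : ℕ, p₂ b = (εu ^ r) ^ j := by
      have hbm : p₂ b ∈ rootsOfUnity m ℂ := hQle hbq
      have hbn : p₂ b ∈ rootsOfUnity n ℂ := hQle_n hbq
      rw [_root_.mem_rootsOfUnity] at hbm hbn
      have hbmC : ((p₂ b : ℂˣ) : ℂ) ^ m = 1 := by
        have h := congrArg Units.val hbm
        rw [Units.val_pow_eq_pow_val] at h
        exact h
      obtain ⟨i2, hi2lt, hi2⟩ : ∃ i < m, eps m ^ i = ((p₂ b : ℂˣ) : ℂ) :=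
        hprim.eq_pow_of_pow_eq_one hbmC
      have hi2u : εu ^ i2 = p₂ b := by
        apply Units.ext
        rw [Units.val_pow_eq_pow_val]
        exact hi2
      have hdvd : m ∣ i2 * n := by
        apply hprim.dvd_of_pow_eq_one
        have h1 : (εu ^ i2) ^ n = 1 := by rw [hi2u]; exact hbn
        have h2 := congrArg Units.val h1
        rw [Units.val_pow_eq_pow_val, Units.val_pow_eq_pow_val] at h2
        rw [pow_mul]
        exact h2
      have hrdvd : r ∣ i2 := by
        rw [← hrn] at hdvd
        exact (Nat.mul_dvd_mul_iff_right hn0).mp hdvd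
      obtain ⟨j, hjj⟩ := hrdvd
      refine ⟨j, ?_⟩
      rw [← hi2u, hjj, pow_mul]
    have hbg : b = G' ^ (-(j : ℤ)) := by
      apply hinjU
      · rw [hbker, _root_.map_zpow, hG1, _root_.one_zpow]
      · rw [hj, _root_.map_zpow, hG2]
        rw [_root_.zpow_neg, _root_.inv_zpow, _root_.inv_inv, _root_.zpow_natCast]
    refine ⟨(Multiplicative.ofAdd ((i1 : ZMod m)), Multiplicative.ofAdd (((-(j : ℤ) : ℤ) : ZMod n))), ?_⟩
    rw [hfval]
    show F ^ (((i1 : ZMod m)).val) * G' ^ ((((-(j : ℤ) : ℤ) : ZMod n)).val) = a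
    rw [ZMod.val_natCast, aux_pow_mod hFm, aux_zmod_pow hGn, ← hbg, hb]
    exact mul_inv_cancel_left _ _
  -- counting
  have hcard2 : Nat.card (Multiplicative (ZMod m) × Multiplicative (ZMod n)) = m * n := by
    rw [Nat.card_prod]
    rw [Nat.card_congr (Multiplicative.toAdd (α := ZMod m)),
      Nat.card_congr (Multiplicative.toAdd (α := ZMod n)), Nat.card_zmod, Nat.card_zmod]
  have hbij : Function.Bijective f :=
    (Nat.bijective_iff_surjective_and_card f).mpr ⟨hsurj, by rw [hcard2, hcardA]⟩
  let e := MulEquiv.ofBijective f hbij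
  -- the closure
  have hcl : Subgroup.closure {((F : SU3)), ((G' : SU3))} = A := by
    apply le_antisymm
    · rw [Subgroup.closure_le]
      rintro x hx
      simp only [Set.mem_insert_iff, Set.mem_singleton_iff] at hx
      rcases hx with rfl | rfl
      · exact F.2
      · exact G'.2
    · intro x hx
      obtain ⟨⟨x1, x2⟩, hfx⟩ := hsurj ⟨x, hx⟩
      rw [hfval] at hfx
      have hvx : x = ((F : SU3)) ^ ((Multiplicative.toAdd x1).val) *
          ((G' : SU3)) ^ ((Multiplicative.toAdd x2).val) := by
        have h2 := congrArg (fun z : ↥A => (z : SU3)) hfx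
        simpa using h2.symm
      rw [hvx]
      exact mul_mem
        (pow_mem (Subgroup.subset_closure (by left; rfl)) _)
        (pow_mem (Subgroup.subset_closure (by right; rfl)) _)
  exact ⟨m, n, hm0, hn0, hndvd, k, hk0, hk1, (F : SU3), (G' : SU3), hFmat, hGmat,
    F.2, G'.2, hcl, ⟨e.symm⟩⟩

end
end

section
/- Let G be a finite subgroup of SU(3) containing the matrix E such that every element of G is of the form E^j·D for some j ∈ {0,1,2} and some diagonal matrix D (i.e. G is generated by E together with diagonal matrices). Then there exist positive integers m, n with n dividing m, and an integer k with 0 ≤ k ≤ r−1 where r = m/n, satisfying 1 + k + k² ≡ 0 (mod r), such that G is generated by the three matrices E, F = diag(ε, ε^k, ε^{−k−1}) and G₀ = diag(1, ε^{−r}, ε^{r}), where ε = exp(2πi/m). -/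
open Matrix Complex

noncomputable section

/-! ### Auxiliary material -/

lemma SU3_mul_coe (a b : SU3) : ((a * b : SU3) : Matrix (Fin 3) (Fin 3) ℂ)
    = (a : Matrix (Fin 3) (Fin 3) ℂ) * (b : Matrix (Fin 3) (Fin 3) ℂ) := rfl

lemma SU3_inv_coe (a : SU3) : ((a⁻¹ : SU3) : Matrix (Fin 3) (Fin 3) ℂ)
    = star (a : Matrix (Fin 3) (Fin 3) ℂ) := rfl

lemma SU3_one_coe : ((1 : SU3) : Matrix (Fin 3) (Fin 3) ℂ) = 1 := rfl

lemma isDiag_mul {A B : Matrix (Fin 3) (Fin 3) ℂ} (hA : A.IsDiag) (hB : B.IsDiag) :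
    (A * B).IsDiag := by
  intro i j hij
  rw [Matrix.mul_apply]
  apply Finset.sum_eq_zero
  intro k _
  rcases eq_or_ne i k with rfl | h
  · rw [hB hij, mul_zero]
  · rw [hA h, zero_mul]

/-- The subgroup of diagonal matrices in SU3. -/
def DiagSU3 : Subgroup SU3 where
  carrier := {g | ((g : Matrix (Fin 3) (Fin 3) ℂ)).IsDiag}
  mul_mem' := fun {a b} ha hb => by
    show ((a * b : SU3) : Matrix (Fin 3) (Fin 3) ℂ).IsDiag
    rw [SU3_mul_coe]; exact isDiag_mul ha hb
  one_mem' := by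
    show ((1 : SU3) : Matrix (Fin 3) (Fin 3) ℂ).IsDiag
    rw [SU3_one_coe]; exact Matrix.isDiag_one
  inv_mem' := fun {a} ha => by
    show ((a⁻¹ : SU3) : Matrix (Fin 3) (Fin 3) ℂ).IsDiag
    rw [SU3_inv_coe, Matrix.star_eq_conjTranspose]
    exact Matrix.IsDiag.conjTranspose ha

/-- entry of a product of elements of DiagSU3 -/
lemma mul_entry (a b : DiagSU3) (i : Fin 3) :
    (((a * b : DiagSU3) : SU3) : Matrix (Fin 3) (Fin 3) ℂ) i i
      = ((a : SU3) : Matrix (Fin 3) (Fin 3) ℂ) i i * ((b : SU3) : Matrix (Fin 3) (Fin 3) ℂ) i i := by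
  have h : (((a * b : DiagSU3) : SU3) : Matrix (Fin 3) (Fin 3) ℂ)
      = ((a : SU3) : Matrix (Fin 3) (Fin 3) ℂ) * ((b : SU3) : Matrix (Fin 3) (Fin 3) ℂ) := rfl
  rw [h, Matrix.mul_apply]
  refine Finset.sum_eq_single i (fun j _ hj => ?_) (by simp)
  rw [a.2 (Ne.symm hj), zero_mul]

/-- the `i`-th diagonal entry, as a group hom to ℂˣ -/
def entryHom (i : Fin 3) : DiagSU3 →* ℂˣ where
  toFun g :=
    { val := ((g : SU3) : Matrix (Fin 3) (Fin 3) ℂ) i i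
      inv := (((g⁻¹ : DiagSU3) : SU3) : Matrix (Fin 3) (Fin 3) ℂ) i i
      val_inv := by
        rw [← mul_entry, mul_inv_cancel]
        show ((1 : Matrix (Fin 3) (Fin 3) ℂ)) i i = 1
        simp
      inv_val := by
        rw [← mul_entry, inv_mul_cancel]
        show ((1 : Matrix (Fin 3) (Fin 3) ℂ)) i i = 1
        simp }
  map_one' := by
    ext
    show ((1 : Matrix (Fin 3) (Fin 3) ℂ)) i i = 1
    simp
  map_mul' := fun a b => by
    ext
    exact mul_entry a b i

lemma entryHom_val (i : Fin 3) (g : DiagSU3) :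
    ((entryHom i g : ℂˣ) : ℂ) = ((g : SU3) : Matrix (Fin 3) (Fin 3) ℂ) i i := rfl

/-- determinant fact -/
lemma diag_det (a : DiagSU3) :
    ((a : SU3) : Matrix (Fin 3) (Fin 3) ℂ) 0 0 * ((a : SU3) : Matrix (Fin 3) (Fin 3) ℂ) 1 1
      * ((a : SU3) : Matrix (Fin 3) (Fin 3) ℂ) 2 2 = 1 := by
  have hdet : ((a : SU3) : Matrix (Fin 3) (Fin 3) ℂ).det = 1 := (a : SU3).2.2
  rw [Matrix.det_fin_three] at hdet
  have h01 := a.2 (show (0 : Fin 3) ≠ 1 by decide)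
  have h02 := a.2 (show (0 : Fin 3) ≠ 2 by decide)
  have h10 := a.2 (show (1 : Fin 3) ≠ 0 by decide)
  have h12 := a.2 (show (1 : Fin 3) ≠ 2 by decide)
  have h20 := a.2 (show (2 : Fin 3) ≠ 0 by decide)
  have h21 := a.2 (show (2 : Fin 3) ≠ 1 by decide)
  rw [h01, h02, h10, h12, h20, h21] at hdet
  ring_nf at hdet ⊢
  linear_combination hdet

/-- a diagonal SU3 element is determined by its first two diagonal entries -/
lemma diag_ext (a b : DiagSU3)
    (h0 : ((a : SU3) : Matrix (Fin 3) (Fin 3) ℂ) 0 0 = ((b : SU3) : Matrix (Fin 3) (Fin 3) ℂ) 0 0)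
    (h1 : ((a : SU3) : Matrix (Fin 3) (Fin 3) ℂ) 1 1 = ((b : SU3) : Matrix (Fin 3) (Fin 3) ℂ) 1 1) :
    a = b := by
  have hda := diag_det a
  have hdb := diag_det b
  set A := ((a : SU3) : Matrix (Fin 3) (Fin 3) ℂ) with hA
  set B := ((b : SU3) : Matrix (Fin 3) (Fin 3) ℂ) with hB
  have hab : A 0 0 * A 1 1 ≠ 0 := by
    intro h
    rw [h, zero_mul] at hda
    exact zero_ne_one hda
  have h2 : A 2 2 = B 2 2 := by
    have : A 0 0 * A 1 1 * A 2 2 = A 0 0 * A 1 1 * B 2 2 := by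
      rw [hda, h0, h1, hdb]
    exact mul_left_cancel₀ hab this
  apply Subtype.ext
  apply Subtype.ext
  ext i j
  rcases eq_or_ne i j with rfl | hij
  · fin_cases i <;> assumption
  · rw [a.2 hij, b.2 hij]

/-- the third entry is determined by the first two -/
lemma third_entry (g : DiagSU3) (c : ℂ)
    (h : ((g : SU3) : Matrix (Fin 3) (Fin 3) ℂ) 0 0 * ((g : SU3) : Matrix (Fin 3) (Fin 3) ℂ) 1 1 * c = 1) :
    ((g : SU3) : Matrix (Fin 3) (Fin 3) ℂ) 2 2 = c := by
  have hd := diag_det g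
  have hab : ((g : SU3) : Matrix (Fin 3) (Fin 3) ℂ) 0 0 * ((g : SU3) : Matrix (Fin 3) (Fin 3) ℂ) 1 1 ≠ 0 := by
    intro h0
    rw [h0, zero_mul] at hd
    exact zero_ne_one hd
  exact mul_left_cancel₀ hab (hd.trans h.symm)

/-- value of a diagonal SU3 element from its diagonal entries -/
lemma diag_val_eq (g : DiagSU3) (v : Fin 3 → ℂ)
    (h0 : ((g : SU3) : Matrix (Fin 3) (Fin 3) ℂ) 0 0 = v 0)
    (h1 : ((g : SU3) : Matrix (Fin 3) (Fin 3) ℂ) 1 1 = v 1)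
    (h2 : ((g : SU3) : Matrix (Fin 3) (Fin 3) ℂ) 2 2 = v 2) :
    ((g : SU3) : Matrix (Fin 3) (Fin 3) ℂ) = Matrix.diagonal v := by
  ext i j
  rcases eq_or_ne i j with rfl | hij
  · rw [Matrix.diagonal_apply_eq]
    fin_cases i <;> assumption
  · rw [g.2 hij, Matrix.diagonal_apply_ne _ hij]

lemma EM_conj (A : Matrix (Fin 3) (Fin 3) ℂ) (hA : A.IsDiag) :
    EM * A * star EM = Matrix.diagonal ![A 1 1, A 2 2, A 0 0] := by
  have h01 := hA (show (0 : Fin 3) ≠ 1 by decide)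
  have h02 := hA (show (0 : Fin 3) ≠ 2 by decide)
  have h10 := hA (show (1 : Fin 3) ≠ 0 by decide)
  have h12 := hA (show (1 : Fin 3) ≠ 2 by decide)
  have h20 := hA (show (2 : Fin 3) ≠ 0 by decide)
  have h21 := hA (show (2 : Fin 3) ≠ 1 by decide)
  ext i j
  fin_cases i <;> fin_cases j <;>
    simp [EM, Matrix.mul_apply, Matrix.vecMul, dotProduct, Fin.sum_univ_three,
      Matrix.star_eq_conjTranspose, Matrix.conjTranspose_apply, Matrix.diagonal,
      h01, h02, h10, h12, h20, h21]

lemma eps_prim (m : ℕ) (hm : m ≠ 0) : IsPrimitiveRoot (eps m) m :=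
  Complex.isPrimitiveRoot_exp m hm

lemma eps_ne_zero (m : ℕ) : eps m ≠ 0 := Complex.exp_ne_zero _

/-- the unit version of eps -/
def epsU (m : ℕ) : ℂˣ := Units.mk0 (eps m) (eps_ne_zero m)

lemma epsU_val (m : ℕ) : ((epsU m : ℂˣ) : ℂ) = eps m := rfl

lemma epsU_prim (m : ℕ) (hm : m ≠ 0) : IsPrimitiveRoot (epsU m) m :=
  IsPrimitiveRoot.coe_units_iff.mp (eps_prim m hm)

lemma epsU_pow_prim {m n r : ℕ} (hm : m ≠ 0) (h : m = r * n) :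
    IsPrimitiveRoot ((epsU m) ^ (-(r : ℤ))) n := by
  rw [_root_.zpow_neg, zpow_natCast, IsPrimitiveRoot.inv_iff]
  exact IsPrimitiveRoot.pow (Nat.pos_of_ne_zero hm) (epsU_prim m hm) h

/-- a finite subgroup of `ℂˣ` consists of the roots of unity of order its cardinality -/
lemma subgroup_eq_rootsOfUnity (H : Subgroup ℂˣ) (hfin : Finite H) :
    H = rootsOfUnity (Nat.card H) ℂ ∧ 0 < Nat.card H := by
  have hpos : 0 < Nat.card H := Nat.card_pos
  have hne : NeZero (Nat.card H) := ⟨hpos.ne'⟩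
  have hle : H ≤ rootsOfUnity (Nat.card H) ℂ := by
    intro x hx
    rw [_root_.mem_rootsOfUnity]
    have h1 : (⟨x, hx⟩ : H) ^ (Nat.card H) = 1 := pow_card_eq_one'
    exact congrArg Subtype.val h1
  have hcard : Nat.card (rootsOfUnity (Nat.card H) ℂ) ≤ Nat.card H := by
    rw [Complex.card_rootsOfUnity]
  exact ⟨Subgroup.eq_of_le_of_card_ge hle hcard, hpos⟩

theorem statement1 (𝒢 : Subgroup SU3) (hfin : Finite 𝒢)
    (E : SU3) (hE : (E : Matrix (Fin 3) (Fin 3) ℂ) = EM) (hEmem : E ∈ 𝒢)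
    (hform : ∀ g ∈ 𝒢, ∃ (j : ℕ) (D : SU3), j < 3 ∧
      ((D : Matrix (Fin 3) (Fin 3) ℂ)).IsDiag ∧ g = E ^ j * D) :
    ∃ m n : ℕ, 0 < m ∧ 0 < n ∧ n ∣ m ∧
      ∃ k : ℤ, 0 ≤ k ∧ k ≤ ((m / n : ℕ) : ℤ) - 1 ∧
        ((m / n : ℕ) : ℤ) ∣ 1 + k + k ^ 2 ∧
        ∃ F G₀ : SU3,
          (F : Matrix (Fin 3) (Fin 3) ℂ) = FM m k ∧
          (G₀ : Matrix (Fin 3) (Fin 3) ℂ) = GM m (m / n) ∧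
          Subgroup.closure {E, F, G₀} = 𝒢 := by
  classical
  -- the subgroup of diagonal elements of 𝒢, inside DiagSU3
  set Δ : Subgroup DiagSU3 := 𝒢.comap DiagSU3.subtype with hΔdef
  have hΔmem : ∀ g : DiagSU3, g ∈ Δ ↔ (g : SU3) ∈ 𝒢 := by
    intro g
    rw [hΔdef, Subgroup.mem_comap, Subgroup.coe_subtype]
  have hfinΔ : Finite Δ := by
    have hinj : Function.Injective (fun g : Δ => (⟨((g : DiagSU3) : SU3), g.2⟩ : 𝒢)) := by
      intro a b hab
      simp only [Subtype.mk.injEq] at hab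
      exact Subtype.ext (Subtype.ext (congrArg (fun x : 𝒢 => (x : SU3)) hab))
    exact Finite.of_injective _ hinj
  -- the first-entry image
  set H1 : Subgroup ℂˣ := Subgroup.map (entryHom 0) Δ with hH1def
  have hH1fin : Finite H1 := by
    apply Set.Finite.to_subtype
    rw [Subgroup.coe_map]
    exact (Set.toFinite (Δ : Set DiagSU3)).image _
  set m : ℕ := Nat.card H1 with hmdef
  obtain ⟨hH1eq, hmpos⟩ := subgroup_eq_rootsOfUnity H1 hH1fin
  have hm : m ≠ 0 := hmpos.ne'
  have : NeZero m := ⟨hm⟩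
  have hεm : (epsU m) ^ m = 1 := by
    ext
    rw [Units.val_pow_eq_pow_val, Units.val_one]
    exact (eps_prim m hm).pow_eq_one
  have hεmz : (epsU m) ^ ((m : ℤ)) = 1 := by rw [zpow_natCast, hεm]
  -- stability of Δ under conjugation by E, shifting the diagonal entries
  have hshift : ∀ g : DiagSU3, g ∈ Δ → ∃ h : DiagSU3, h ∈ Δ ∧
      entryHom 0 h = entryHom 1 g ∧ entryHom 1 h = entryHom 2 g := by
    intro g hg
    have hxval : ((E * (g : SU3) * E⁻¹ : SU3) : Matrix (Fin 3) (Fin 3) ℂ)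
        = Matrix.diagonal ![((g : SU3) : Matrix (Fin 3) (Fin 3) ℂ) 1 1,
            ((g : SU3) : Matrix (Fin 3) (Fin 3) ℂ) 2 2,
            ((g : SU3) : Matrix (Fin 3) (Fin 3) ℂ) 0 0] := by
      rw [SU3_mul_coe, SU3_mul_coe, SU3_inv_coe, hE, EM_conj _ g.2]
    have hxdiag : (E * (g : SU3) * E⁻¹ : SU3) ∈ DiagSU3 := by
      show ((E * (g : SU3) * E⁻¹ : SU3) : Matrix (Fin 3) (Fin 3) ℂ).IsDiag
      rw [hxval]
      exact Matrix.isDiag_diagonal _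
    refine ⟨⟨E * (g : SU3) * E⁻¹, hxdiag⟩, ?_, ?_, ?_⟩
    · rw [hΔmem]
      exact mul_mem (mul_mem hEmem ((hΔmem g).mp hg)) (inv_mem hEmem)
    · ext
      rw [entryHom_val, entryHom_val]
      show ((E * (g : SU3) * E⁻¹ : SU3) : Matrix (Fin 3) (Fin 3) ℂ) 0 0 = _
      rw [hxval, Matrix.diagonal_apply_eq]
      rfl
    · ext
      rw [entryHom_val, entryHom_val]
      show ((E * (g : SU3) * E⁻¹ : SU3) : Matrix (Fin 3) (Fin 3) ℂ) 1 1 = _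
      rw [hxval, Matrix.diagonal_apply_eq]
      rfl
  have hH2le : ∀ g : DiagSU3, g ∈ Δ → entryHom 1 g ∈ H1 := by
    intro g hg
    obtain ⟨h, hmem, h0, _⟩ := hshift g hg
    exact h0 ▸ ⟨h, hmem, rfl⟩
  -- ε is a first entry of some element of Δ
  have hεH1 : epsU m ∈ H1 := by
    rw [hH1eq, _root_.mem_rootsOfUnity]
    exact hεm
  obtain ⟨D₀, hD₀Δ, hD₀0⟩ := hεH1
  -- the kernel subgroup K and its second-entry image
  set K : Subgroup DiagSU3 := Δ ⊓ (entryHom 0).ker with hKdef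
  have hKmem : ∀ g : DiagSU3, g ∈ K ↔ g ∈ Δ ∧ entryHom 0 g = 1 := by
    intro g
    rw [hKdef, Subgroup.mem_inf, MonoidHom.mem_ker]
  have hKle : K ≤ Δ := inf_le_left
  set HK : Subgroup ℂˣ := Subgroup.map (entryHom 1) K with hHKdef
  have hHKfin : Finite HK := by
    apply Set.Finite.to_subtype
    rw [Subgroup.coe_map]
    apply Set.Finite.image
    exact (Set.toFinite (Δ : Set DiagSU3)).subset hKle
  set n : ℕ := Nat.card HK with hndef
  obtain ⟨hHKeq, hnpos⟩ := subgroup_eq_rootsOfUnity HK hHKfin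
  have hn : n ≠ 0 := hnpos.ne'
  have : NeZero n := ⟨hn⟩
  -- n divides m
  have hHKleH1 : HK ≤ H1 := by
    rintro x ⟨g, hgK, rfl⟩
    exact hH2le g (hKle hgK)
  have hnm : n ∣ m := Subgroup.card_dvd_of_le hHKleH1
  set r : ℕ := m / n with hrdef
  have hr : m = n * r := (Nat.mul_div_cancel' hnm).symm
  have hrne : r ≠ 0 := by
    intro h0
    rw [h0, mul_zero] at hr
    exact hm hr
  have hrpos : (0 : ℤ) < (r : ℤ) := by exact_mod_cast Nat.pos_of_ne_zero hrne
  -- the element κ of K with second entry ε^(-r)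
  have hκmem : (epsU m) ^ (-(r : ℤ)) ∈ HK := by
    rw [hHKeq, _root_.mem_rootsOfUnity]
    rw [← zpow_natCast ((epsU m) ^ (-(r : ℤ))) n, ← _root_.zpow_mul]
    have he : -(r : ℤ) * n = -(m : ℤ) := by rw [hr]; push_cast; ring
    rw [he, _root_.zpow_neg, hεmz, inv_one]
  obtain ⟨κ, hκK, hκ1⟩ := hκmem
  have hκ0 : entryHom 0 κ = 1 := ((hKmem κ).mp hκK).2
  -- injectivity of the second entry on K
  have hKinj : ∀ a ∈ K, ∀ b ∈ K, entryHom 1 a = entryHom 1 b → a = b := by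
    intro a ha b hb hab
    apply diag_ext
    · have h1 : entryHom 0 a = 1 := ((hKmem a).mp ha).2
      have h2 : entryHom 0 b = 1 := ((hKmem b).mp hb).2
      have e1 : ((a : SU3) : Matrix (Fin 3) (Fin 3) ℂ) 0 0 = 1 := by
        rw [← entryHom_val 0 a, h1, Units.val_one]
      have e2 : ((b : SU3) : Matrix (Fin 3) (Fin 3) ℂ) 0 0 = 1 := by
        rw [← entryHom_val 0 b, h2, Units.val_one]
      rw [e1, e2]
    · have h3 := congrArg Units.val hab
      rwa [entryHom_val, entryHom_val] at h3
  -- construct F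
  have hbH1 : entryHom 1 D₀ ∈ H1 := hH2le D₀ hD₀Δ
  rw [hH1eq] at hbH1
  obtain ⟨a, ham, haeq⟩ := (epsU_prim m hm).eq_pow_of_mem_rootsOfUnity hbH1
  set k : ℤ := (a : ℤ) % (r : ℤ) with hkdef
  set q : ℤ := (a : ℤ) / (r : ℤ) with hqdef
  have hk0 : 0 ≤ k := Int.emod_nonneg _ hrpos.ne'
  have hkr : k < (r : ℤ) := Int.emod_lt_of_pos _ hrpos
  obtain ⟨F, hFdef⟩ : ∃ F : DiagSU3, F = D₀ * κ ^ q := ⟨_, rfl⟩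
  have hFΔ : F ∈ Δ := by
    rw [hFdef]
    exact mul_mem hD₀Δ (zpow_mem (hKle hκK) q)
  have hF0 : entryHom 0 F = epsU m := by
    rw [hFdef, _root_.map_mul, map_zpow, hκ0, _root_.one_zpow, mul_one, hD₀0]
  have hF1 : entryHom 1 F = (epsU m) ^ k := by
    rw [hFdef, _root_.map_mul, map_zpow, hκ1, ← haeq, ← zpow_natCast (epsU m) a, ← _root_.zpow_mul, ← _root_.zpow_add]
    congr 1
    rw [hkdef, hqdef, Int.emod_def]
    ring
  -- value of F as a matrix
  have hFval0 : ((F : SU3) : Matrix (Fin 3) (Fin 3) ℂ) 0 0 = eps m := by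
    rw [← entryHom_val 0 F, hF0]; rfl
  have hFval1 : ((F : SU3) : Matrix (Fin 3) (Fin 3) ℂ) 1 1 = eps m ^ k := by
    rw [← entryHom_val 1 F, hF1, Units.val_zpow_eq_zpow_val]; rfl
  have hFval2 : ((F : SU3) : Matrix (Fin 3) (Fin 3) ℂ) 2 2 = eps m ^ (-k - 1) := by
    apply third_entry
    rw [hFval0, hFval1]
    have hne := eps_ne_zero m
    calc eps m * eps m ^ k * eps m ^ (-k - 1)
        = eps m ^ ((1 : ℤ) + k + (-k - 1)) := by
          rw [zpow_add₀ hne, zpow_add₀ hne, zpow_one]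
      _ = 1 := by
          have h9 : (1 : ℤ) + k + (-k - 1) = 0 := by ring
          rw [h9, zpow_zero]
  have hFM : ((F : SU3) : Matrix (Fin 3) (Fin 3) ℂ) = FM m k := by
    refine diag_val_eq F _ ?_ ?_ ?_ <;> simp [hFval0, hFval1, hFval2]
  -- value of κ as a matrix
  have hκval0 : ((κ : SU3) : Matrix (Fin 3) (Fin 3) ℂ) 0 0 = 1 := by
    rw [← entryHom_val 0 κ, hκ0, Units.val_one]
  have hκval1 : ((κ : SU3) : Matrix (Fin 3) (Fin 3) ℂ) 1 1 = eps m ^ (-(r : ℤ)) := by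
    rw [← entryHom_val 1 κ, hκ1, Units.val_zpow_eq_zpow_val]; rfl
  have hκval2 : ((κ : SU3) : Matrix (Fin 3) (Fin 3) ℂ) 2 2 = eps m ^ ((r : ℤ)) := by
    apply third_entry
    rw [hκval0, hκval1, one_mul, ← zpow_add₀ (eps_ne_zero m)]
    norm_num
  have hGM : ((κ : SU3) : Matrix (Fin 3) (Fin 3) ℂ) = GM m r := by
    refine diag_val_eq κ _ ?_ ?_ ?_ <;> simp [hκval0, hκval1, hκval2]
  -- divisibility condition: r ∣ 1 + k + k²
  have hdvd : ((r : ℕ) : ℤ) ∣ 1 + k + k ^ 2 := by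
    obtain ⟨Y, hYΔ, hY0, hY1⟩ := hshift F hFΔ
    have hF2 : entryHom 2 F = (epsU m) ^ (-k - 1) := by
      ext
      rw [entryHom_val, hFval2, Units.val_zpow_eq_zpow_val]
      rfl
    obtain ⟨W, hWdef⟩ : ∃ W : DiagSU3, W = Y * F ^ (-k) := ⟨_, rfl⟩
    have hWK : W ∈ K := by
      rw [hKmem]
      constructor
      · rw [hWdef]
        exact mul_mem hYΔ (zpow_mem hFΔ (-k))
      · rw [hWdef, _root_.map_mul, map_zpow, hY0, hF1, hF0, ← _root_.zpow_add]
        simp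
    have hW1 : entryHom 1 W = (epsU m) ^ (-(1 + k + k ^ 2)) := by
      rw [hWdef, _root_.map_mul, map_zpow, hY1, hF2, hF1, ← _root_.zpow_mul, ← _root_.zpow_add]
      congr 1
      ring
    have hmemHK : entryHom 1 W ∈ HK := ⟨W, hWK, rfl⟩
    rw [hHKeq, _root_.mem_rootsOfUnity] at hmemHK
    rw [hW1, ← zpow_natCast ((epsU m) ^ (-(1 + k + k ^ 2))) n, ← _root_.zpow_mul] at hmemHK
    have hdv : (m : ℤ) ∣ -(1 + k + k ^ 2) * n :=
      ((epsU_prim m hm).zpow_eq_one_iff_dvd _).mp hmemHK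
    rw [hr] at hdv
    push_cast at hdv
    obtain ⟨c, hc⟩ := hdv
    have hnz : (n : ℤ) ≠ 0 := by exact_mod_cast hn
    refine ⟨-c, mul_left_cancel₀ hnz ?_⟩
    linear_combination -hc
  -- conclusion
  refine ⟨m, n, hmpos, hnpos, hnm, k, hk0, ?_, ?_, (F : SU3), (κ : SU3), hFM, ?_, ?_⟩
  · show k ≤ (r : ℤ) - 1
    omega
  · show ((r : ℕ) : ℤ) ∣ 1 + k + k ^ 2
    exact hdvd
  · show ((κ : SU3) : Matrix (Fin 3) (Fin 3) ℂ) = GM m r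
    exact hGM
  · -- closure equality
    apply le_antisymm
    · rw [Subgroup.closure_le]
      intro x hx
      simp only [Set.mem_insert_iff, Set.mem_singleton_iff] at hx
      rcases hx with rfl | rfl | rfl
      · exact hEmem
      · exact (hΔmem F).mp hFΔ
      · exact (hΔmem κ).mp (hKle hκK)
    · intro g hg
      obtain ⟨j, D, -, hDdiag, rfl⟩ := hform g hg
      have hD𝒢 : D ∈ 𝒢 := by
        have h4 := mul_mem (inv_mem (pow_mem hEmem j)) hg
        rwa [inv_mul_cancel_left] at h4
      have hDd : (⟨D, hDdiag⟩ : DiagSU3) ∈ Δ := (hΔmem _).mpr hD𝒢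
      have h0 : entryHom 0 (⟨D, hDdiag⟩ : DiagSU3) ∈ H1 := ⟨_, hDd, rfl⟩
      rw [hH1eq] at h0
      obtain ⟨t, htm, ht⟩ := (epsU_prim m hm).eq_pow_of_mem_rootsOfUnity h0
      obtain ⟨W, hWdef⟩ : ∃ W : DiagSU3, W = (⟨D, hDdiag⟩ : DiagSU3) * (F ^ t)⁻¹ := ⟨_, rfl⟩
      have hWK : W ∈ K := by
        rw [hKmem]
        constructor
        · rw [hWdef]
          exact mul_mem hDd (inv_mem (pow_mem hFΔ t))
        · rw [hWdef, _root_.map_mul, map_inv, map_pow, hF0, ← ht]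
          exact mul_inv_cancel _
      have hW1 : entryHom 1 W ∈ HK := ⟨W, hWK, rfl⟩
      rw [hHKeq] at hW1
      obtain ⟨s, hsn, hs⟩ :=
        (epsU_pow_prim hm (by rw [hr, Nat.mul_comm])).eq_pow_of_mem_rootsOfUnity hW1
      have hWκ : W = κ ^ s := by
        apply hKinj W hWK (κ ^ s) (pow_mem hκK s)
        rw [map_pow, hκ1, hs]
      have hDeq : (⟨D, hDdiag⟩ : DiagSU3) = κ ^ s * F ^ t := by
        rw [← hWκ, hWdef, inv_mul_cancel_right]
      have hDeq' : D = (κ : SU3) ^ s * (F : SU3) ^ t := by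
        have h5 := congrArg (fun z : DiagSU3 => (z : SU3)) hDeq
        simpa using h5
      have hmemc : D ∈ Subgroup.closure {E, (F : SU3), (κ : SU3)} := by
        rw [hDeq']
        exact mul_mem (pow_mem (Subgroup.subset_closure (by simp)) s)
          (pow_mem (Subgroup.subset_closure (by simp)) t)
      exact mul_mem (pow_mem (Subgroup.subset_closure (by simp)) j) hmemc

end
end

section
/- Let G be a finite subgroup of SU(3) containing the matrices E and B such that every element of G is of the form P·D where P lies in the subgroup generated by E and B, and D is a diagonal matrix. Then there exist positive integers m, n with n dividing m, and an integer k with 0 ≤ k ≤ r−1 where r = m/n, satisfying both 1 + k + k² ≡ 0 (mod r) and 1 + 2k ≡ 0 (mod r), such that G is generated by the four matrices E, B, F = diag(ε, ε^k, ε^{−k−1}) and G₀ = diag(1, ε^{−r}, ε^{r}), where ε = exp(2πi/m). -/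
open Matrix Complex

noncomputable section

namespace SU3Aux

lemma eps_ne_zero (m : ℕ) : eps m ≠ 0 := Complex.exp_ne_zero _

lemma eps_pow_self (m : ℕ) (hm : m ≠ 0) : eps m ^ (m : ℤ) = 1 := by
  have := (Complex.isPrimitiveRoot_exp m hm).pow_eq_one
  rw [zpow_natCast]; exact this

lemma abs_eps (m : ℕ) (hm : m ≠ 0) : ‖eps m‖ = 1 := by
  have h : ‖eps m‖ ^ m = 1 := by
    rw [← norm_pow]
    have h2 : eps m ^ m = 1 := (Complex.isPrimitiveRoot_exp m hm).pow_eq_one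
    rw [h2, norm_one]
  have h0 : (0:ℝ) ≤ ‖eps m‖ := norm_nonneg _
  rcases pow_eq_one_iff_cases.mp h with h1 | h1 | h1
  · omega
  · exact h1
  · exfalso; rw [h1.1] at h0; linarith

/-- conj of eps powers -/
lemma conj_zpow_eps (m : ℕ) (hm : m ≠ 0) (x : ℤ) :
    (starRingEnd ℂ) (eps m ^ x) = eps m ^ (-x) := by
  rw [map_zpow₀, ← Complex.inv_eq_conj (abs_eps m hm), _root_.zpow_neg, _root_.inv_zpow']
  exact zpow_neg _ _


/-- The diagonal SU(3) matrix with entries ζ^x, ζ^y, ζ^(-x-y) for ζ = eps m. -/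
def dgM (m : ℕ) (x y : ℤ) : Matrix (Fin 3) (Fin 3) ℂ :=
  Matrix.diagonal ![eps m ^ x, eps m ^ y, eps m ^ (-x - y)]

lemma dgM_mem (m : ℕ) (hm : m ≠ 0) (x y : ℤ) :
    dgM m x y ∈ Matrix.specialUnitaryGroup (Fin 3) ℂ := by
  rw [Matrix.mem_specialUnitaryGroup_iff]
  constructor
  · rw [Matrix.mem_unitaryGroup_iff]
    rw [dgM, Matrix.star_eq_conjTranspose, Matrix.diagonal_conjTranspose,
      Matrix.diagonal_mul_diagonal]
    rw [show (1 : Matrix (Fin 3) (Fin 3) ℂ) = Matrix.diagonal 1 from (Matrix.diagonal_one).symm,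
      Matrix.diagonal_eq_diagonal_iff]
    intro i
    have key : ∀ z : ℤ, eps m ^ z * star (eps m ^ z) = 1 := by
      intro z
      show eps m ^ z * (starRingEnd ℂ) (eps m ^ z) = 1
      rw [conj_zpow_eps m hm, ← zpow_add₀ (eps_ne_zero m), add_neg_cancel, zpow_zero]
    fin_cases i <;>
      simp only [Pi.mul_apply, Pi.star_apply, Pi.one_apply, Matrix.cons_val_zero,
        Matrix.cons_val_one, Matrix.head_cons, Matrix.cons_val_two, Matrix.tail_cons] <;>
      first
      | exact key x
      | exact key y
      | exact key (-x - y)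
  · rw [dgM, Matrix.det_diagonal, Fin.prod_univ_three]
    show eps m ^ x * eps m ^ y * eps m ^ (-x - y) = 1
    rw [← zpow_add₀ (eps_ne_zero m), ← zpow_add₀ (eps_ne_zero m)]
    norm_num

/-- dg as an element of SU3. -/
def dg (m : ℕ) (hm : m ≠ 0) (x y : ℤ) : SU3 := ⟨dgM m x y, dgM_mem m hm x y⟩

lemma dg_eq_iff_exps (m : ℕ) (hm : m ≠ 0) {x y x' y' : ℤ} (hx : eps m ^ x = eps m ^ x')
    (hy : eps m ^ y = eps m ^ y') : dg m hm x y = dg m hm x' y' := by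
  apply Subtype.ext
  show dgM m x y = dgM m x' y'
  unfold dgM
  rw [Matrix.diagonal_eq_diagonal_iff]
  intro i
  fin_cases i <;> simp only [Matrix.cons_val_zero, Matrix.cons_val_one, Matrix.head_cons,
    Matrix.cons_val_two, Matrix.tail_cons]
  · exact hx
  · exact hy
  · show eps m ^ (-x - y) = eps m ^ (-x' - y')
    have h0 := eps_ne_zero m
    have : eps m ^ (-x - y) * (eps m ^ x * eps m ^ y) = eps m ^ (-x' - y') * (eps m ^ x' * eps m ^ y') := by
      rw [← zpow_add₀ h0, ← zpow_add₀ h0, ← zpow_add₀ h0, ← zpow_add₀ h0]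
      norm_num
    rw [hx, hy] at this
    exact mul_right_cancel₀ (mul_ne_zero (zpow_ne_zero _ h0) (zpow_ne_zero _ h0)) this

lemma dg_one (m : ℕ) (hm : m ≠ 0) : dg m hm 0 0 = 1 := by
  apply Subtype.ext
  show dgM m 0 0 = 1
  unfold dgM
  rw [show (1 : Matrix (Fin 3) (Fin 3) ℂ) = Matrix.diagonal 1 from (Matrix.diagonal_one).symm,
    Matrix.diagonal_eq_diagonal_iff]
  intro i
  fin_cases i <;> simp

lemma dg_mul (m : ℕ) (hm : m ≠ 0) (x y x' y' : ℤ) :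
    dg m hm x y * dg m hm x' y' = dg m hm (x + x') (y + y') := by
  apply Subtype.ext
  show dgM m x y * dgM m x' y' = dgM m (x + x') (y + y')
  unfold dgM
  rw [Matrix.diagonal_mul_diagonal, Matrix.diagonal_eq_diagonal_iff]
  intro i
  have h0 := eps_ne_zero m
  fin_cases i <;> simp <;> rw [← zpow_add₀ h0] <;> congr 1 <;> ring

lemma dg_inv (m : ℕ) (hm : m ≠ 0) (x y : ℤ) : (dg m hm x y)⁻¹ = dg m hm (-x) (-y) := by
  rw [inv_eq_iff_mul_eq_one, dg_mul]
  simp [dg_one]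

lemma dg_pow (m : ℕ) (hm : m ≠ 0) (x y : ℤ) (n : ℕ) :
    dg m hm x y ^ n = dg m hm (n * x) (n * y) := by
  induction n with
  | zero => simpa using (dg_one m hm).symm
  | succ n ih =>
    rw [pow_succ, ih, dg_mul]
    congr 1 <;> push_cast <;> ring

lemma dg_zpow (m : ℕ) (hm : m ≠ 0) (x y : ℤ) (n : ℤ) :
    dg m hm x y ^ n = dg m hm (n * x) (n * y) := by
  cases n with
  | ofNat n => rw [Int.ofNat_eq_coe, zpow_natCast, dg_pow]
  | negSucc n =>
    rw [zpow_negSucc, dg_pow, dg_inv]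
    congr 1 <;> rw [Int.negSucc_eq] <;> push_cast <;> ring

/-- shift the exponents by multiples of m -/
lemma dg_shift (m : ℕ) (hm : m ≠ 0) (x y t u : ℤ) :
    dg m hm (x + m * t) (y + m * u) = dg m hm x y := by
  apply dg_eq_iff_exps m hm <;>
  · rw [zpow_add₀ (eps_ne_zero m), _root_.zpow_mul, eps_pow_self m hm, _root_.one_zpow, mul_one]


lemma diag3 (a b c : ℂ) : Matrix.diagonal ![a,b,c] = !![a,0,0;0,b,0;0,0,c] := by
  ext i j
  fin_cases i <;> fin_cases j <;> simp [Matrix.diagonal, Matrix.vecHead, Matrix.vecTail]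

lemma star_EM : star EM = !![0,0,1;1,0,0;0,1,0] := by
  ext i j
  fin_cases i <;> fin_cases j <;>
    simp [EM, Matrix.star_eq_conjTranspose, Matrix.conjTranspose_apply, Matrix.vecHead, Matrix.vecTail]

lemma star_BM : star BM = BM := by
  ext i j
  fin_cases i <;> fin_cases j <;>
    simp [BM, Matrix.star_eq_conjTranspose, Matrix.conjTranspose_apply, Matrix.vecHead, Matrix.vecTail]

lemma EM_conj (a b c : ℂ) : EM * Matrix.diagonal ![a,b,c] * star EM = Matrix.diagonal ![b,c,a] := by
  rw [diag3, diag3, star_EM, EM]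
  rw [Matrix.mul_fin_three, Matrix.mul_fin_three]
  norm_num

lemma BM_conj (a b c : ℂ) : BM * Matrix.diagonal ![a,b,c] * star BM = Matrix.diagonal ![a,c,b] := by
  rw [diag3, diag3, star_BM, BM]
  rw [Matrix.mul_fin_three, Matrix.mul_fin_three]
  norm_num

lemma coe_mul (A C : SU3) : ((A * C : SU3) : Matrix (Fin 3) (Fin 3) ℂ) = A.val * C.val := rfl

lemma coe_inv (A : SU3) : ((A⁻¹ : SU3) : Matrix (Fin 3) (Fin 3) ℂ) = star A.val := rfl

lemma dg_conj_E (m : ℕ) (hm : m ≠ 0) (E : SU3) (hE : E.val = EM) (x y : ℤ) :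
    E * dg m hm x y * E⁻¹ = dg m hm y (-x - y) := by
  apply Subtype.ext
  rw [coe_mul, coe_mul, coe_inv, hE]
  show EM * dgM m x y * star EM = dgM m y (-x - y)
  unfold dgM
  rw [EM_conj]
  have : -y - (-x - y) = x := by ring
  rw [this]

lemma dg_conj_B (m : ℕ) (hm : m ≠ 0) (B : SU3) (hB : B.val = BM) (x y : ℤ) :
    B * dg m hm x y * B⁻¹ = dg m hm x (-x - y) := by
  apply Subtype.ext
  rw [coe_mul, coe_mul, coe_inv, hB]
  show BM * dgM m x y * star BM = dgM m x (-x - y)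
  unfold dgM
  rw [BM_conj]
  have : -x - (-x - y) = y := by ring
  rw [this]


lemma coe_pow (A : SU3) (n : ℕ) : ((A ^ n : SU3) : Matrix (Fin 3) (Fin 3) ℂ) = A.val ^ n :=
  SubmonoidClass.coe_pow A n

lemma isDiag_eq_dg (m : ℕ) (hm : m ≠ 0) (D : SU3) (hdiag : (D.val).IsDiag)
    (hpow : D ^ m = 1) : ∃ x y : ℤ, D = dg m hm x y := by
  haveI : NeZero m := ⟨hm⟩
  set v := Matrix.diag D.val with hv
  have hDv : D.val = Matrix.diagonal v := (hdiag.diagonal_diag).symm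
  have hvpow : ∀ i, v i ^ m = 1 := by
    have h1 : D.val ^ m = 1 := by
      rw [← coe_pow, hpow]; rfl
    rw [hDv, Matrix.diagonal_pow] at h1
    rw [show (1 : Matrix (Fin 3) (Fin 3) ℂ) = Matrix.diagonal 1 from (Matrix.diagonal_one).symm,
      Matrix.diagonal_eq_diagonal_iff] at h1
    intro i
    simpa using h1 i
  have hprim : IsPrimitiveRoot (eps m) m := Complex.isPrimitiveRoot_exp m hm
  obtain ⟨x0, _, hx0⟩ := hprim.eq_pow_of_pow_eq_one (hvpow 0)
  obtain ⟨y0, _, hy0⟩ := hprim.eq_pow_of_pow_eq_one (hvpow 1)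
  refine ⟨x0, y0, ?_⟩
  have hdet : v 0 * v 1 * v 2 = 1 := by
    have h2 : D.val.det = 1 := D.2.2
    rw [hDv, Matrix.det_diagonal, Fin.prod_univ_three] at h2
    exact h2
  have h0 := eps_ne_zero m
  have hv2 : v 2 = eps m ^ (-(x0:ℤ) - (y0:ℤ)) := by
    have hne : v 0 * v 1 ≠ 0 := by
      rw [← hx0, ← hy0]
      exact mul_ne_zero (pow_ne_zero _ h0) (pow_ne_zero _ h0)
    have : v 2 = (v 0 * v 1)⁻¹ := by
      field_simp
      rw [one_div]; exact eq_inv_of_mul_eq_one_left (by rw [mul_comm]; exact hdet)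
    rw [this, ← hx0, ← hy0, ← pow_add, ← zpow_natCast, ← _root_.zpow_neg]
    congr 1
    push_cast
    ring
  apply Subtype.ext
  rw [hDv]
  show Matrix.diagonal v = dgM m x0 y0
  unfold dgM
  rw [Matrix.diagonal_eq_diagonal_iff]
  have e1 : v 0 = eps m ^ (x0:ℤ) := by rw [zpow_natCast]; exact hx0.symm
  have e2 : v 1 = eps m ^ (y0:ℤ) := by rw [zpow_natCast]; exact hy0.symm
  intro i
  fin_cases i <;> simp [e1, e2, hv2]

lemma eps_pow_d (e d m : ℕ) (hm : m ≠ 0) (hd : d ≠ 0) (hrel : d * m = e) :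
    eps e ^ (d : ℤ) = eps m := by
  rw [zpow_natCast]
  unfold eps
  rw [← Complex.exp_nat_mul]
  congr 1
  have he : (e : ℂ) = (d : ℂ) * m := by push_cast [← hrel]; ring
  have hd' : (d : ℂ) ≠ 0 := Nat.cast_ne_zero.mpr hd
  have hm' : (m : ℂ) ≠ 0 := Nat.cast_ne_zero.mpr hm
  rw [he]
  field_simp

lemma dg_val_FM (e d m : ℕ) (he : e ≠ 0) (hm : m ≠ 0) (hd : d ≠ 0) (hrel : d * m = e) (k : ℤ) :
    (dg e he (d:ℤ) ((d:ℤ)*k)).val = FM m k := by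
  show dgM e (d:ℤ) ((d:ℤ)*k) = FM m k
  unfold dgM FM
  have hε := eps_pow_d e d m hm hd hrel
  rw [Matrix.diagonal_eq_diagonal_iff]
  have e2 : eps e ^ ((d:ℤ)*k) = eps m ^ k := by rw [← hε, ← _root_.zpow_mul]
  have e3 : eps e ^ (-(d:ℤ) - (d:ℤ)*k) = eps m ^ (-k-1) := by
    rw [← hε, ← _root_.zpow_mul]; congr 1; ring
  intro i
  fin_cases i <;> simp [hε, e2, e3]

lemma dg_val_GM (e d m r : ℕ) (he : e ≠ 0) (hm : m ≠ 0) (hd : d ≠ 0) (hrel : d * m = e) :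
    (dg e he 0 (-((d:ℤ)*r))).val = GM m r := by
  show dgM e 0 (-((d:ℤ)*r)) = GM m r
  unfold dgM GM
  have hε := eps_pow_d e d m hm hd hrel
  rw [Matrix.diagonal_eq_diagonal_iff]
  have e2 : eps e ^ (-((d:ℤ)*(r:ℤ))) = eps m ^ (-(r:ℤ)) := by
    rw [← hε, ← _root_.zpow_mul]; congr 1; ring
  have e3 : eps e ^ ((d:ℤ)*(r:ℤ)) = eps m ^ (r:ℤ) := by
    rw [← hε, ← _root_.zpow_mul]
  intro i
  fin_cases i <;> simp [e2, e3]


lemma dg_congr (m : ℕ) (hm : m ≠ 0) {x y x' y' : ℤ} (hx : x = x') (hy : y = y') :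
    dg m hm x y = dg m hm x' y' := by rw [hx, hy]

lemma dg_m_zero (m : ℕ) (hm : m ≠ 0) : dg m hm (m:ℤ) 0 = 1 := by
  calc dg m hm (m:ℤ) 0 = dg m hm (0 + (m:ℤ)*1) (0 + (m:ℤ)*0) := dg_congr m hm (by ring) (by ring)
    _ = dg m hm 0 0 := dg_shift m hm 0 0 1 0
    _ = 1 := dg_one m hm

lemma dg_zero_m (m : ℕ) (hm : m ≠ 0) : dg m hm 0 (m:ℤ) = 1 := by
  calc dg m hm 0 (m:ℤ) = dg m hm (0 + (m:ℤ)*0) (0 + (m:ℤ)*1) := dg_congr m hm (by ring) (by ring)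
    _ = dg m hm 0 0 := dg_shift m hm 0 0 0 1
    _ = 1 := dg_one m hm

end SU3Aux

open SU3Aux

theorem statement2 (𝒢 : Subgroup SU3) (hfin : Finite 𝒢)
    (E B : SU3) (hE : (E : Matrix (Fin 3) (Fin 3) ℂ) = EM) (hB : (B : Matrix (Fin 3) (Fin 3) ℂ) = BM)
    (hEmem : E ∈ 𝒢) (hBmem : B ∈ 𝒢)
    (hform : ∀ g ∈ 𝒢, ∃ P D : SU3, P ∈ Subgroup.closure ({E, B} : Set SU3) ∧
      ((D : Matrix (Fin 3) (Fin 3) ℂ)).IsDiag ∧ g = P * D) :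
    ∃ m n : ℕ, 0 < m ∧ 0 < n ∧ n ∣ m ∧
      ∃ k : ℤ, 0 ≤ k ∧ k ≤ ((m / n : ℕ) : ℤ) - 1 ∧
        ((m / n : ℕ) : ℤ) ∣ 1 + k + k ^ 2 ∧
        ((m / n : ℕ) : ℤ) ∣ 1 + 2 * k ∧
        ∃ F G₀ : SU3,
          (F : Matrix (Fin 3) (Fin 3) ℂ) = FM m k ∧
          (G₀ : Matrix (Fin 3) (Fin 3) ℂ) = GM m (m / n) ∧
          Subgroup.closure {E, B, F, G₀} = 𝒢 := by
  classical
  haveI : Finite ↥𝒢 := hfin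
  set e := Monoid.exponent ↥𝒢 with he_def
  have he : e ≠ 0 := Monoid.exponent_ne_zero_of_finite
  -- extraction of diagonal elements
  have extract : ∀ D : SU3, D ∈ 𝒢 → (D.val).IsDiag → ∃ x y : ℤ, D = dg e he x y := by
    intro D hD hdiag
    apply isDiag_eq_dg e he D hdiag
    have h1 : (⟨D, hD⟩ : ↥𝒢) ^ e = 1 := Monoid.pow_exponent_eq_one _
    have h2 := congrArg (Subtype.val) h1
    rw [SubmonoidClass.coe_pow] at h2
    exact h2
  -- closure properties of Lmem
  have hL_one : dg e he 0 0 ∈ 𝒢 := by rw [dg_one]; exact one_mem 𝒢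
  have hL_mul : ∀ {x y x' y' : ℤ}, dg e he x y ∈ 𝒢 → dg e he x' y' ∈ 𝒢 →
      dg e he (x + x') (y + y') ∈ 𝒢 := by
    intro x y x' y' h h'
    rw [← dg_mul]; exact mul_mem h h'
  have hL_inv : ∀ {x y : ℤ}, dg e he x y ∈ 𝒢 → dg e he (-x) (-y) ∈ 𝒢 := by
    intro x y h
    rw [← dg_inv]; exact inv_mem h
  have hL_sub : ∀ (x y x' y' z : ℤ), dg e he x y ∈ 𝒢 → dg e he x' y' ∈ 𝒢 →
      dg e he (x - z * x') (y - z * y') ∈ 𝒢 := by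
    intro x y x' y' z h h'
    have heq : dg e he (x - z * x') (y - z * y') = dg e he x y * (dg e he x' y' ^ z)⁻¹ := by
      rw [dg_zpow, dg_inv, dg_mul]
      exact dg_congr e he (by ring) (by ring)
    rw [heq]
    exact mul_mem h (inv_mem (Subgroup.zpow_mem 𝒢 h' z))
  -- invariance
  have hcyc : ∀ {x y : ℤ}, dg e he x y ∈ 𝒢 → dg e he y (-x - y) ∈ 𝒢 := by
    intro x y h
    rw [← dg_conj_E e he E hE x y]
    exact mul_mem (mul_mem hEmem h) (inv_mem hEmem)
  have hswap : ∀ {x y : ℤ}, dg e he x y ∈ 𝒢 → dg e he x (-x - y) ∈ 𝒢 := by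
    intro x y h
    rw [← dg_conj_B e he B hB x y]
    exact mul_mem (mul_mem hBmem h) (inv_mem hBmem)
  -- the subgroup H (first coordinates)
  let H : AddSubgroup ℤ := {
    carrier := {x | ∃ y, dg e he x y ∈ 𝒢}
    zero_mem' := ⟨0, hL_one⟩
    add_mem' := by rintro x x' ⟨y, hy⟩ ⟨y', hy'⟩; exact ⟨y + y', hL_mul hy hy'⟩
    neg_mem' := by rintro x ⟨y, hy⟩; exact ⟨-y, hL_inv hy⟩ }
  let K : AddSubgroup ℤ := {
    carrier := {y | dg e he 0 y ∈ 𝒢}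
    zero_mem' := hL_one
    add_mem' := by
      rintro y y' hy hy'
      have := hL_mul hy hy'
      rwa [show (0:ℤ) + 0 = 0 by ring] at this
    neg_mem' := by
      rintro y hy
      have := hL_inv hy
      rwa [show -(0:ℤ) = 0 by ring] at this }
  obtain ⟨d₀, hHd⟩ := Int.subgroup_cyclic H
  obtain ⟨s₀, hKs⟩ := Int.subgroup_cyclic K
  have hHmem : ∀ x : ℤ, (∃ y, dg e he x y ∈ 𝒢) ↔ d₀ ∣ x := by
    intro x
    have : x ∈ H ↔ d₀ ∣ x := by
      rw [hHd, ← AddSubgroup.zmultiples_eq_closure, Int.mem_zmultiples_iff]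
    exact this
  have hKmem : ∀ y : ℤ, (dg e he 0 y ∈ 𝒢) ↔ s₀ ∣ y := by
    intro y
    have : y ∈ K ↔ s₀ ∣ y := by
      rw [hKs, ← AddSubgroup.zmultiples_eq_closure, Int.mem_zmultiples_iff]
    exact this
  -- e belongs to both
  have heH : d₀ ∣ (e:ℤ) := (hHmem e).mp ⟨0, by rw [dg_m_zero]; exact one_mem 𝒢⟩
  have heK : s₀ ∣ (e:ℤ) := (hKmem e).mp (by rw [dg_zero_m]; exact one_mem 𝒢)
  set d : ℕ := d₀.natAbs with hd_def
  set s : ℕ := s₀.natAbs with hs_def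
  have hd0 : d ≠ 0 := by
    intro h
    have : d₀ = 0 := Int.natAbs_eq_zero.mp h
    rw [this] at heH
    exact he (by exact_mod_cast zero_dvd_iff.mp heH)
  have hs0 : s ≠ 0 := by
    intro h
    have : s₀ = 0 := Int.natAbs_eq_zero.mp h
    rw [this] at heK
    exact he (by exact_mod_cast zero_dvd_iff.mp heK)
  have hHmem' : ∀ x : ℤ, (∃ y, dg e he x y ∈ 𝒢) ↔ (d:ℤ) ∣ x := by
    intro x; rw [hHmem x, hd_def, Int.natAbs_dvd]
  have hKmem' : ∀ y : ℤ, (dg e he 0 y ∈ 𝒢) ↔ (s:ℤ) ∣ y := by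
    intro y; rw [hKmem y, hs_def, Int.natAbs_dvd]
  -- coordinates divisible by d
  have hcoord : ∀ x y : ℤ, dg e he x y ∈ 𝒢 → (d:ℤ) ∣ x ∧ (d:ℤ) ∣ y := by
    intro x y h
    refine ⟨(hHmem' x).mp ⟨y, h⟩, (hHmem' y).mp ⟨-x - y, hcyc h⟩⟩
  -- divisibilities between d, s, e
  have hde : d ∣ e := by
    have : (d:ℤ) ∣ (e:ℤ) := by rw [hd_def, Int.natAbs_dvd]; exact heH
    exact_mod_cast this
  have hse : s ∣ e := by
    have : (s:ℤ) ∣ (e:ℤ) := by rw [hs_def, Int.natAbs_dvd]; exact heK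
    exact_mod_cast this
  have hsK : dg e he 0 (s:ℤ) ∈ 𝒢 := (hKmem' s).mpr dvd_rfl
  have hds : d ∣ s := by
    have : (d:ℤ) ∣ (s:ℤ) := ((hcoord 0 s hsK).2)
    exact_mod_cast this
  set m : ℕ := e / d with hm_def
  set n : ℕ := e / s with hn_def
  set r : ℕ := s / d with hr_def
  have hdm : d * m = e := Nat.mul_div_cancel' hde
  have hsn : s * n = e := Nat.mul_div_cancel' hse
  have hdr : d * r = s := Nat.mul_div_cancel' hds
  have hm0 : m ≠ 0 := by intro h; rw [h, mul_zero] at hdm; exact he hdm.symm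
  have hn0 : n ≠ 0 := by intro h; rw [h, mul_zero] at hsn; exact he hsn.symm
  have hr0 : r ≠ 0 := by intro h; rw [h, mul_zero] at hdr; exact hs0 hdr.symm
  have hmrn : m = r * n := by
    have h1 : d * (r * n) = d * m := by
      rw [← mul_assoc, hdr, hsn, hdm]
    exact (Nat.eq_of_mul_eq_mul_left (Nat.pos_of_ne_zero hd0) h1).symm
  have hnm : n ∣ m := ⟨r, by rw [hmrn, mul_comm]⟩
  have hmn_div : m / n = r := by
    rw [hmrn]
    exact Nat.mul_div_cancel r (Nat.pos_of_ne_zero hn0)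
  have hsdr : (s:ℤ) = (d:ℤ) * (r:ℤ) := by exact_mod_cast hdr.symm
  -- get the element (d, d*k)
  obtain ⟨c, hc⟩ := (hHmem' d).mpr dvd_rfl
  obtain ⟨k₀, hk₀⟩ := (hcoord _ _ hc).2
  set k : ℤ := k₀ % (r:ℤ) with hk_def
  have hrpos : (0:ℤ) < (r:ℤ) := by exact_mod_cast Nat.pos_of_ne_zero hr0
  have hk_nonneg : 0 ≤ k := Int.emod_nonneg k₀ (by exact_mod_cast hr0)
  have hk_lt : k < (r:ℤ) := Int.emod_lt_of_pos k₀ hrpos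
  have hkey : dg e he (d:ℤ) ((d:ℤ) * k) ∈ 𝒢 := by
    have h1 := hL_sub (d:ℤ) c 0 (s:ℤ) (k₀ / (r:ℤ)) hc hsK
    have heq : dg e he ((d:ℤ) - k₀ / (r:ℤ) * 0) (c - k₀ / (r:ℤ) * (s:ℤ)) =
        dg e he (d:ℤ) ((d:ℤ) * k) := by
      apply dg_congr e he (by ring)
      rw [hk₀, hsdr, hk_def]
      rw [Int.emod_def]
      ring
    rwa [heq] at h1
  -- divisibility conditions
  have hcancel : ∀ w : ℤ, (s:ℤ) ∣ (d:ℤ) * w → (r:ℤ) ∣ w := by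
    intro w hw
    rw [hsdr] at hw
    exact (mul_dvd_mul_iff_left (show (d:ℤ) ≠ 0 by exact_mod_cast hd0)).mp hw
  have hdvd12 : (r:ℤ) ∣ 1 + 2 * k := by
    have h1 := hL_sub (d:ℤ) (-(d:ℤ) - (d:ℤ)*k) (d:ℤ) ((d:ℤ)*k) 1 (hswap hkey) hkey
    have heq : dg e he ((d:ℤ) - 1*(d:ℤ)) ((-(d:ℤ) - (d:ℤ)*k) - 1*((d:ℤ)*k)) =
        dg e he 0 (-((d:ℤ) * (1 + 2*k))) := dg_congr e he (by ring) (by ring)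
    rw [heq] at h1
    have h2 : (s:ℤ) ∣ -((d:ℤ) * (1 + 2*k)) := (hKmem' _).mp h1
    exact hcancel _ ((dvd_neg).mp h2)
  have hdvd1kk : (r:ℤ) ∣ 1 + k + k^2 := by
    have h1 := hL_sub ((d:ℤ)*k) (-(d:ℤ) - (d:ℤ)*k) (d:ℤ) ((d:ℤ)*k) k (hcyc hkey) hkey
    have heq : dg e he ((d:ℤ)*k - k*(d:ℤ)) ((-(d:ℤ) - (d:ℤ)*k) - k*((d:ℤ)*k)) =
        dg e he 0 (-((d:ℤ) * (1 + k + k^2))) := dg_congr e he (by ring) (by ring)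
    rw [heq] at h1
    have h2 : (s:ℤ) ∣ -((d:ℤ) * (1 + k + k^2)) := (hKmem' _).mp h1
    exact hcancel _ ((dvd_neg).mp h2)
  -- define F and G₀
  set F : SU3 := dg e he (d:ℤ) ((d:ℤ) * k) with hF_def
  set G₀ : SU3 := dg e he 0 (-((d:ℤ) * (r:ℤ))) with hG₀_def
  have hG₀mem : G₀ ∈ 𝒢 := by
    rw [hG₀_def]
    exact (hKmem' _).mpr ⟨-1, by rw [hsdr]; ring⟩
  have hFval : (F : Matrix (Fin 3) (Fin 3) ℂ) = FM m k := dg_val_FM e d m he hm0 hd0 hdm k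
  have hG₀val : (G₀ : Matrix (Fin 3) (Fin 3) ℂ) = GM m (m / n) := by
    rw [hmn_div]
    exact dg_val_GM e d m r he hm0 hd0 hdm
  -- the main closure equality
  have hclosure : Subgroup.closure {E, B, F, G₀} = 𝒢 := by
    apply le_antisymm
    · rw [Subgroup.closure_le]
      rintro x (rfl | rfl | rfl | rfl)
      · exact hEmem
      · exact hBmem
      · exact hkey
      · exact hG₀mem
    · intro g hg
      obtain ⟨P, D, hP, hDdiag, rfl⟩ := hform g hg
      have hP𝒢 : P ∈ 𝒢 := by
        have hEB : Subgroup.closure ({E, B} : Set SU3) ≤ 𝒢 := by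
          rw [Subgroup.closure_le]
          rintro x (rfl | rfl)
          · exact hEmem
          · exact hBmem
        exact hEB hP
      have hD𝒢 : D ∈ 𝒢 := by
        have : D = P⁻¹ * (P * D) := by group
        rw [this]
        exact mul_mem (inv_mem hP𝒢) hg
      obtain ⟨x, y, rfl⟩ := extract D hD𝒢 hDdiag
      obtain ⟨hdx, hdy⟩ := hcoord x y hD𝒢
      obtain ⟨a, ha⟩ := hdx
      obtain ⟨b, hb⟩ := hdy
      -- r divides b - a*k
      have hrba : (r:ℤ) ∣ b - a * k := by
        have h1 := hL_sub x y (d:ℤ) ((d:ℤ)*k) a hD𝒢 hkey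
        have heq : dg e he (x - a*(d:ℤ)) (y - a*((d:ℤ)*k)) =
            dg e he 0 ((d:ℤ) * (b - a*k)) := dg_congr e he (by rw [ha]; ring) (by rw [hb]; ring)
        rw [heq] at h1
        exact hcancel _ ((hKmem' _).mp h1)
      obtain ⟨t, ht⟩ := hrba
      have hdecomp : dg e he x y = F ^ a * G₀ ^ (-t) := by
        rw [hF_def, hG₀_def, dg_zpow, dg_zpow, dg_mul]
        apply dg_congr e he
        · rw [ha]; ring
        · rw [hb]
          have : b = a * k + (r:ℤ) * t := by linarith [ht]
          rw [this]; ring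
      have hmemF : F ∈ Subgroup.closure ({E, B, F, G₀} : Set SU3) :=
        Subgroup.subset_closure (by right; right; left; rfl)
      have hmemG₀ : G₀ ∈ Subgroup.closure ({E, B, F, G₀} : Set SU3) :=
        Subgroup.subset_closure (by right; right; right; rfl)
      have hmemP : P ∈ Subgroup.closure ({E, B, F, G₀} : Set SU3) := by
        apply Subgroup.closure_mono (show ({E, B} : Set SU3) ⊆ {E, B, F, G₀} by
          rintro x (rfl | rfl)
          · left; rfl
          · right; left; rfl)
        exact hP
      rw [hdecomp]
      exact mul_mem hmemP (mul_mem (Subgroup.zpow_mem _ hmemF a) (Subgroup.zpow_mem _ hmemG₀ (-t)))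
  -- assemble the answer
  refine ⟨m, n, Nat.pos_of_ne_zero hm0, Nat.pos_of_ne_zero hn0, hnm, k, hk_nonneg, ?_, ?_, ?_,
    F, G₀, hFval, hG₀val, hclosure⟩
  · rw [hmn_div]; omega
  · rw [hmn_div]; exact hdvd1kk
  · rw [hmn_div]; exact hdvd12

end
end

section
/- Let m, n be positive integers with n dividing m, set r = m/n and ε = exp(2πi/m), and let k, ℓ, ℓ' be integers with 1 + k + k² = ℓ·r and 1 + 2k = ℓ'·r. Then for F = diag(ε, ε^k, ε^{−k−1}) and G = diag(1, ε^{−r}, ε^{r}) the following matrix identities hold: E F E⁻¹ = F^k G^ℓ, E G E⁻¹ = F^{−r} G^{−(k+1)}, B F B⁻¹ = F G^{ℓ'}, and B G B⁻¹ = G⁻¹. -/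
open Matrix Complex

noncomputable section

lemma star_eps (m : ℕ) : star (eps m) = (eps m)⁻¹ := by
  rw [eps, Complex.star_def, ← Complex.exp_conj, ← Complex.exp_neg]
  congr 1
  simp [map_div₀]
  ring_nf
  simp [map_ofNat]
  ring

lemma star_eps_zpow (m : ℕ) (z : ℤ) : star (eps m ^ z) = eps m ^ (-z) := by
  rw [star_zpow₀, star_eps, ← _root_.zpow_neg_one, ← _root_.zpow_mul, neg_one_mul]

lemma eps_zpow_add (m : ℕ) (a b : ℤ) : eps m ^ (a+b) = eps m ^ a * eps m ^ b :=
  zpow_add₀ (Complex.exp_ne_zero _) a b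

lemma val_mul (A B : SU3) : ((A*B : SU3) : Matrix (Fin 3) (Fin 3) ℂ) = A.val * B.val := rfl

lemma val_inv (A : SU3) : ((A⁻¹ : SU3) : Matrix (Fin 3) (Fin 3) ℂ) = star A.val := rfl

lemma one_diag : (1 : Matrix (Fin 3) (Fin 3) ℂ) = diagonal ![1,1,1] := by
  have : ![(1:ℂ),1,1] = (fun _ => 1) := by
    funext i; fin_cases i <;> rfl
  rw [this, Matrix.diagonal_one.symm]

lemma star_diag (a b c : ℂ) :
    star (diagonal ![a,b,c]) = diagonal ![star a, star b, star c] := by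
  rw [Matrix.star_eq_conjTranspose, Matrix.diagonal_conjTranspose]
  congr 1
  funext i; fin_cases i <;> rfl

lemma mul_diag3 (a b c d e f : ℂ) :
    diagonal ![a,b,c] * diagonal ![d,e,f] = diagonal ![a*d, b*e, c*f] := by
  rw [diagonal_mul_diagonal]
  refine congrArg diagonal ?_
  funext j; fin_cases j <;> simp

lemma diag_vec_ext (a b c a' b' c' : ℂ) (h1 : a = a') (h2 : b = b') (h3 : c = c') :
    (diagonal ![a,b,c] : Matrix (Fin 3) (Fin 3) ℂ) = diagonal ![a',b',c'] := by
  rw [h1, h2, h3]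

lemma conjE (d0 d1 d2 : ℂ) :
    EM * diagonal ![d0,d1,d2] * star EM = diagonal ![d1,d2,d0] := by
  ext i j
  fin_cases i <;> fin_cases j <;>
    simp [EM, Matrix.mul_apply, Fin.sum_univ_three, Matrix.star_eq_conjTranspose,
      Matrix.conjTranspose_apply, Matrix.diagonal_apply, Matrix.vecHead, Matrix.vecTail, Matrix.vecMul_diagonal]

lemma conjB (d0 d1 d2 : ℂ) :
    BM * diagonal ![d0,d1,d2] * star BM = diagonal ![d0,d2,d1] := by
  ext i j
  fin_cases i <;> fin_cases j <;>
    simp [BM, Matrix.mul_apply, Fin.sum_univ_three, Matrix.star_eq_conjTranspose,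
      Matrix.conjTranspose_apply, Matrix.diagonal_apply, Matrix.vecHead, Matrix.vecTail, Matrix.vecMul_diagonal]

lemma val_zpow (m : ℕ) (A : SU3) (a b c : ℤ)
    (hA : A.val = diagonal ![eps m ^ a, eps m ^ b, eps m ^ c]) (z : ℤ) :
    ((A ^ z : SU3) : Matrix (Fin 3) (Fin 3) ℂ)
      = diagonal ![eps m ^ (a*z), eps m ^ (b*z), eps m ^ (c*z)] := by
  induction z using Int.induction_on with
  | zero =>
      simp only [zpow_zero, mul_zero]
      show (1 : Matrix (Fin 3) (Fin 3) ℂ) = _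
      simpa using one_diag
  | succ i ih =>
      rw [_root_.zpow_add_one, val_mul, ih, hA, diagonal_mul_diagonal]
      refine congrArg diagonal ?_
      funext j
      fin_cases j <;>
        simp [mul_add, eps_zpow_add, mul_one]
  | pred i ih =>
      rw [_root_.zpow_sub_one, val_mul, ih, val_inv, hA, star_diag, star_eps_zpow,
        star_eps_zpow, star_eps_zpow, diagonal_mul_diagonal]
      have e : ∀ x : ℤ, x * (-(i:ℤ) - 1) = x * (-(i:ℤ)) + (-x) := fun x => by ring
      rw [e a, e b, e c, eps_zpow_add m (a * (-(i:ℤ))) (-a),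
        eps_zpow_add m (b * (-(i:ℤ))) (-b), eps_zpow_add m (c * (-(i:ℤ))) (-c)]
      refine congrArg diagonal ?_
      funext j
      fin_cases j <;> simp

lemma eps_eq (m : ℕ) (a b : ℤ) (h : a = b) : eps m ^ a = eps m ^ b := by rw [h]

theorem statement3 (m n : ℕ) (hm : 0 < m) (hn : 0 < n) (hnm : n ∣ m)
    (k l l' : ℤ)
    (hl : 1 + k + k ^ 2 = l * ((m / n : ℕ) : ℤ))
    (hl' : 1 + 2 * k = l' * ((m / n : ℕ) : ℤ))
    (E B F G : SU3)
    (hE : (E : Matrix (Fin 3) (Fin 3) ℂ) = EM)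
    (hB : (B : Matrix (Fin 3) (Fin 3) ℂ) = BM)
    (hF : (F : Matrix (Fin 3) (Fin 3) ℂ) = FM m k)
    (hG : (G : Matrix (Fin 3) (Fin 3) ℂ) = GM m (m / n)) :
    E * F * E⁻¹ = F ^ k * G ^ l ∧
    E * G * E⁻¹ = F ^ (-((m / n : ℕ) : ℤ)) * G ^ (-(k + 1)) ∧
    B * F * B⁻¹ = F * G ^ l' ∧
    B * G * B⁻¹ = G⁻¹ := by
  set r : ℤ := ((m / n : ℕ) : ℤ) with hr
  have hF1 : F.val = diagonal ![eps m ^ (1:ℤ), eps m ^ k, eps m ^ (-k-1)] := by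
    rw [hF, FM, zpow_one]
  have hG1 : G.val = diagonal ![eps m ^ (0:ℤ), eps m ^ (-r), eps m ^ r] := by
    rw [hG, GM, zpow_zero]
  refine ⟨?_, ?_, ?_, ?_⟩
  · apply Subtype.ext
    rw [val_mul, val_mul, val_inv, hE, hF1, conjE,
      val_mul, val_zpow m F 1 k (-k-1) hF1 k, val_zpow m G 0 (-r) r hG1 l, mul_diag3]
    refine diag_vec_ext _ _ _ _ _ _ ?_ ?_ ?_
    · rw [← eps_zpow_add]; apply eps_eq; ring
    · rw [← eps_zpow_add]; apply eps_eq; linear_combination -hl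
    · rw [← eps_zpow_add]; apply eps_eq; linear_combination hl
  · apply Subtype.ext
    rw [val_mul, val_mul, val_inv, hE, hG1, conjE,
      val_mul, val_zpow m F 1 k (-k-1) hF1 (-r), val_zpow m G 0 (-r) r hG1 (-(k+1)),
      mul_diag3]
    refine diag_vec_ext _ _ _ _ _ _ ?_ ?_ ?_
    · rw [← eps_zpow_add]; apply eps_eq; ring
    · rw [← eps_zpow_add]; apply eps_eq; ring
    · rw [← eps_zpow_add]; apply eps_eq; ring
  · apply Subtype.ext
    rw [val_mul, val_mul, val_inv, hB, hF1, conjB,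
      val_mul, hF1, val_zpow m G 0 (-r) r hG1 l', mul_diag3]
    refine diag_vec_ext _ _ _ _ _ _ ?_ ?_ ?_
    · rw [← eps_zpow_add]; apply eps_eq; ring
    · rw [← eps_zpow_add]; apply eps_eq; linear_combination -hl'
    · rw [← eps_zpow_add]; apply eps_eq; linear_combination hl'
  · apply Subtype.ext
    rw [val_mul, val_mul, val_inv, hB, hG1, conjB,
      val_inv, hG1, star_diag, star_eps_zpow, star_eps_zpow, star_eps_zpow]
    refine diag_vec_ext _ _ _ _ _ _ ?_ ?_ ?_
    · apply eps_eq; ring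
    · apply eps_eq; ring
    · apply eps_eq; ring

end
end

section
/- Let m, n be positive integers with n dividing m, set r = m/n and ε = exp(2πi/m), and let k be any integer. Then for F = diag(ε, ε^k, ε^{−k−1}) and G = diag(1, ε^{−r}, ε^{r}) in SU(3): F has order m, G has order n, the cyclic subgroups generated by F and by G intersect trivially, and the subgroup generated by F and G is isomorphic to ℤ_m × ℤ_n; in particular it has exactly m·n elements. -/
open Matrix Complex

noncomputable section

lemma conj_eps (m : ℕ) : (starRingEnd ℂ) (eps m) = (eps m)⁻¹ := by
  rw [eps, ← Complex.exp_conj, ← Complex.exp_neg]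
  congr 1
  simp only [map_div₀, _root_.map_mul, Complex.conj_I, Complex.conj_ofReal, map_ofNat,
    map_natCast]
  ring

lemma su3_inv_val (y : SU3) :
    ((y⁻¹ : SU3) : Matrix (Fin 3) (Fin 3) ℂ) = star (y : Matrix (Fin 3) (Fin 3) ℂ) := rfl

lemma su3_zpow_diag (x : SU3) (v : Fin 3 → ℂ)
    (hx : (x : Matrix (Fin 3) (Fin 3) ℂ) = Matrix.diagonal v)
    (hc : ∀ i, (starRingEnd ℂ) (v i) = (v i)⁻¹) (a : ℤ) :
    ((x ^ a : SU3) : Matrix (Fin 3) (Fin 3) ℂ) = Matrix.diagonal (fun i => v i ^ a) := by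
  have hpow : ∀ b : ℕ, ((x ^ b : SU3) : Matrix (Fin 3) (Fin 3) ℂ)
      = Matrix.diagonal (fun i => v i ^ b) := by
    intro b
    rw [SubmonoidClass.coe_pow, hx, Matrix.diagonal_pow]
    congr 1
  cases a with
  | ofNat b =>
      have h1 : (fun i => v i ^ (Int.ofNat b)) = fun i => v i ^ b := by
        funext i
        exact zpow_natCast (v i) b
      rw [h1]
      show ((x ^ ((b : ℕ) : ℤ) : SU3) : Matrix (Fin 3) (Fin 3) ℂ) = _
      rw [zpow_natCast, hpow b]
  | negSucc b =>
      have h1 : (star fun i => v i ^ (b + 1)) = fun i => v i ^ Int.negSucc b := by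
        funext i
        show star (v i ^ (b + 1)) = v i ^ Int.negSucc b
        rw [Complex.star_def, map_pow, hc i, zpow_negSucc, inv_pow]
      rw [zpow_negSucc, su3_inv_val, hpow, Matrix.star_eq_conjTranspose,
        Matrix.diagonal_conjTranspose, h1]

theorem statement4 (m n : ℕ) (hm : 0 < m) (hn : 0 < n) (hnm : n ∣ m) (k : ℤ)
    (F G : SU3)
    (hF : (F : Matrix (Fin 3) (Fin 3) ℂ) = FM m k)
    (hG : (G : Matrix (Fin 3) (Fin 3) ℂ) = GM m (m / n)) :
    orderOf F = m ∧ orderOf G = n ∧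
    Subgroup.zpowers F ⊓ Subgroup.zpowers G = ⊥ ∧
    Nonempty ((Subgroup.closure ({F, G} : Set SU3)) ≃*
      Multiplicative (ZMod m) × Multiplicative (ZMod n)) ∧
    Nat.card (Subgroup.closure ({F, G} : Set SU3)) = m * n := by
  haveI : NeZero m := ⟨hm.ne'⟩
  haveI : NeZero n := ⟨hn.ne'⟩
  set r : ℕ := m / n with hrdef
  have hr : r * n = m := Nat.div_mul_cancel hnm
  set ε : ℂ := eps m with hedef
  have hε0 : ε ≠ 0 := eps_ne_zero m
  have hprim : IsPrimitiveRoot ε m := Complex.isPrimitiveRoot_exp m hm.ne'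
  have hprimr : IsPrimitiveRoot (ε ^ r) n := hprim.pow hm hr.symm
  -- conjugation facts
  have hconj : ∀ t : ℤ, (starRingEnd ℂ) (ε ^ t) = (ε ^ t)⁻¹ := by
    intro t
    rw [hedef, map_zpow₀, conj_eps, _root_.inv_zpow]
  -- the diagonal vectors
  set vF : Fin 3 → ℂ := ![ε, ε ^ k, ε ^ (-k - 1)] with hvF
  set vG : Fin 3 → ℂ := ![1, ε ^ (-(r : ℤ)), ε ^ (r : ℤ)] with hvG
  have hcF : ∀ i, (starRingEnd ℂ) (vF i) = (vF i)⁻¹ := by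
    intro i
    fin_cases i
    · simpa [hvF, hedef] using conj_eps m
    · simpa [hvF] using hconj k
    · simpa [hvF] using hconj (-k - 1)
  have hcG : ∀ i, (starRingEnd ℂ) (vG i) = (vG i)⁻¹ := by
    intro i
    fin_cases i
    · simp [hvG]
    · simpa [hvG] using hconj (-(r : ℤ))
    · simpa [hvG] using hconj ((r : ℤ))
  have hFpow : ∀ a : ℤ, ((F ^ a : SU3) : Matrix (Fin 3) (Fin 3) ℂ)
      = Matrix.diagonal (fun i => vF i ^ a) :=
    su3_zpow_diag F vF (by rw [hF, hvF, hedef]; rfl) hcF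
  have hGpow : ∀ a : ℤ, ((G ^ a : SU3) : Matrix (Fin 3) (Fin 3) ℂ)
      = Matrix.diagonal (fun i => vG i ^ a) :=
    su3_zpow_diag G vG (by rw [hG, hvG, hedef]; rfl) hcG
  -- F ^ a = 1 ↔ m ∣ a
  have hF1 : ∀ a : ℤ, F ^ a = 1 ↔ (m : ℤ) ∣ a := by
    intro a
    constructor
    · intro h
      have h2 : ((F ^ a : SU3) : Matrix (Fin 3) (Fin 3) ℂ) = 1 := by rw [h]; rfl
      rw [hFpow] at h2
      have h3 : vF 0 ^ a = 1 := by
        have := congrFun (congrFun h2 0) 0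
        simpa using this
      have h4 : ε ^ a = 1 := by simpa [hvF] using h3
      exact (hprim.zpow_eq_one_iff_dvd a).mp h4
    · intro hdvd
      have hεa : ε ^ a = 1 := (hprim.zpow_eq_one_iff_dvd a).mpr hdvd
      apply Subtype.ext
      show ((F ^ a : SU3) : Matrix (Fin 3) (Fin 3) ℂ) = _
      rw [hFpow]
      have hone : (fun i => vF i ^ a) = fun _ => (1 : ℂ) := by
        funext i
        have key : ∀ t : ℤ, (ε ^ t) ^ a = 1 := fun t => by
          rw [← _root_.zpow_mul, mul_comm, _root_.zpow_mul, hεa, _root_.one_zpow]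
        fin_cases i
        · simpa [hvF] using key 1
        · simpa [hvF] using key k
        · simpa [hvF] using key (-k - 1)
      rw [hone]
      show Matrix.diagonal (fun _ => (1:ℂ)) = ((1 : SU3) : Matrix (Fin 3) (Fin 3) ℂ)
      simp [Matrix.diagonal_one]
  -- G ^ a = 1 ↔ n ∣ a
  have hG1 : ∀ a : ℤ, G ^ a = 1 ↔ (n : ℤ) ∣ a := by
    intro a
    constructor
    · intro h
      have h2 : ((G ^ a : SU3) : Matrix (Fin 3) (Fin 3) ℂ) = 1 := by rw [h]; rfl
      rw [hGpow] at h2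
      have h3 : vG 2 ^ a = 1 := by
        have := congrFun (congrFun h2 2) 2
        simpa using this
      have h4 : (ε ^ r) ^ a = 1 := by
        rw [← zpow_natCast ε r]
        simpa [hvG] using h3
      exact (hprimr.zpow_eq_one_iff_dvd a).mp h4
    · intro hdvd
      have hεa : (ε ^ (r : ℤ)) ^ a = 1 := by
        rw [zpow_natCast]
        exact (hprimr.zpow_eq_one_iff_dvd a).mpr hdvd
      apply Subtype.ext
      show ((G ^ a : SU3) : Matrix (Fin 3) (Fin 3) ℂ) = _
      rw [hGpow]
      have hone : (fun i => vG i ^ a) = fun _ => (1 : ℂ) := by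
        funext i
        fin_cases i
        · simp [hvG]
        · show (ε ^ (-(r:ℤ))) ^ a = 1
          rw [_root_.zpow_neg, _root_.inv_zpow, hεa, inv_one]
        · exact hεa
      rw [hone]
      show Matrix.diagonal (fun _ => (1:ℂ)) = ((1 : SU3) : Matrix (Fin 3) (Fin 3) ℂ)
      simp [Matrix.diagonal_one]
  have hFm : F ^ (m : ℤ) = 1 := (hF1 m).mpr dvd_rfl
  have hGn : G ^ (n : ℤ) = 1 := (hG1 n).mpr dvd_rfl
  have hFmn : F ^ m = 1 := by rw [← zpow_natCast]; exact hFm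
  have hGnn : G ^ n = 1 := by rw [← zpow_natCast]; exact hGn
  -- orders
  have hordF : orderOf F = m := by
    have h1 : orderOf F ∣ m := orderOf_dvd_of_pow_eq_one hFmn
    have hfin : IsOfFinOrder F := isOfFinOrder_iff_pow_eq_one.mpr ⟨m, hm, hFmn⟩
    have h2 : (m : ℤ) ∣ (orderOf F : ℤ) := by
      apply (hF1 _).mp
      rw [zpow_natCast]
      exact pow_orderOf_eq_one F
    exact Nat.dvd_antisymm h1 (Int.ofNat_dvd.mp h2)
  have hordG : orderOf G = n := by
    have h1 : orderOf G ∣ n := orderOf_dvd_of_pow_eq_one hGnn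
    have h2 : (n : ℤ) ∣ (orderOf G : ℤ) := by
      apply (hG1 _).mp
      rw [zpow_natCast]
      exact pow_orderOf_eq_one G
    exact Nat.dvd_antisymm h1 (Int.ofNat_dvd.mp h2)
  -- the key: F^a * G^b = 1 → m ∣ a ∧ n ∣ b
  have hkey : ∀ (a b : ℤ), F ^ a * G ^ b = 1 → (m : ℤ) ∣ a ∧ (n : ℤ) ∣ b := by
    intro a b h
    have hmat : ((F ^ a : SU3) : Matrix (Fin 3) (Fin 3) ℂ)
        * ((G ^ b : SU3) : Matrix (Fin 3) (Fin 3) ℂ) = 1 := by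
      have := congrArg Subtype.val h
      simpa using this
    rw [hFpow, hGpow, Matrix.diagonal_mul_diagonal] at hmat
    have h00 : ε ^ a = 1 := by
      have := congrFun (congrFun hmat 0) 0
      simpa [hvF, hvG] using this
    have hma : (m : ℤ) ∣ a := (hprim.zpow_eq_one_iff_dvd a).mp h00
    refine ⟨hma, ?_⟩
    have hFa : F ^ a = 1 := (hF1 a).mpr hma
    have hGb : G ^ b = 1 := by rwa [hFa, one_mul] at h
    exact (hG1 b).mp hGb
  -- trivial intersection
  have hinter : Subgroup.zpowers F ⊓ Subgroup.zpowers G = ⊥ := by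
    rw [eq_bot_iff]
    rintro x hx
    obtain ⟨hx1, hx2⟩ := Subgroup.mem_inf.mp hx
    obtain ⟨a, ha⟩ := Subgroup.mem_zpowers_iff.mp hx1
    obtain ⟨b, hb⟩ := Subgroup.mem_zpowers_iff.mp hx2
    have h1 : F ^ a * G ^ (-b) = 1 := by
      rw [ha, _root_.zpow_neg, hb, mul_inv_cancel]
    have hma : (m : ℤ) ∣ a := (hkey a (-b) h1).1
    have : x = 1 := by rw [← ha]; exact (hF1 a).mpr hma
    simpa [Subgroup.mem_bot] using this
  -- homomorphism from ZMod m
  have hFm' : ((m : ℤ) • Additive.ofMul F) = 0 := by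
    rw [← ofMul_zpow, hFm]; rfl
  have hGn' : ((n : ℤ) • Additive.ofMul G) = 0 := by
    rw [← ofMul_zpow, hGn]; rfl
  set fF : ZMod m →+ Additive SU3 :=
    ZMod.lift m ⟨zmultiplesHom (Additive SU3) (Additive.ofMul F),
      by simpa using hFm'⟩ with hfF
  set fG : ZMod n →+ Additive SU3 :=
    ZMod.lift n ⟨zmultiplesHom (Additive SU3) (Additive.ofMul G),
      by simpa using hGn'⟩ with hfG
  set φF : Multiplicative (ZMod m) →* SU3 :=
    { toFun := fun x => Additive.toMul (fF x.toAdd),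
      map_one' := by simp,
      map_mul' := by intro x y; simp } with hφFdef
  set φG : Multiplicative (ZMod n) →* SU3 :=
    { toFun := fun x => Additive.toMul (fG x.toAdd),
      map_one' := by simp,
      map_mul' := by intro x y; simp } with hφGdef
  have hφF : ∀ a : ℤ, φF (Multiplicative.ofAdd ((a : ZMod m))) = F ^ a := by
    intro a
    show Additive.toMul (fF ((a : ZMod m))) = F ^ a
    rw [hfF, ZMod.lift_coe]
    show Additive.toMul ((a : ℤ) • Additive.ofMul F) = F ^ a
    rw [← ofMul_zpow]
    rfl
  have hφG : ∀ b : ℤ, φG (Multiplicative.ofAdd ((b : ZMod n))) = G ^ b := by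
    intro b
    show Additive.toMul (fG ((b : ZMod n))) = G ^ b
    rw [hfG, ZMod.lift_coe]
    show Additive.toMul ((b : ℤ) • Additive.ofMul G) = G ^ b
    rw [← ofMul_zpow]
    rfl
  have hsurjm : ∀ x : Multiplicative (ZMod m), ∃ a : ℤ,
      x = Multiplicative.ofAdd ((a : ZMod m)) := by
    intro x
    obtain ⟨a, ha⟩ := ZMod.intCast_surjective (x.toAdd)
    exact ⟨a, by rw [ha]; rfl⟩
  have hsurjn : ∀ y : Multiplicative (ZMod n), ∃ b : ℤ,
      y = Multiplicative.ofAdd ((b : ZMod n)) := by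
    intro y
    obtain ⟨b, hb⟩ := ZMod.intCast_surjective (y.toAdd)
    exact ⟨b, by rw [hb]; rfl⟩
  have hFGcomm : Commute F G := by
    show F * G = G * F
    apply Subtype.ext
    show (F : Matrix (Fin 3) (Fin 3) ℂ) * G = (G : Matrix (Fin 3) (Fin 3) ℂ) * F
    have hd : (fun i => (![eps m, eps m ^ k, eps m ^ (-k - 1)] : Fin 3 → ℂ) i
        * (![1, eps m ^ (-(r : ℤ)), eps m ^ (r : ℤ)] : Fin 3 → ℂ) i)
        = fun i => (![1, eps m ^ (-(r : ℤ)), eps m ^ (r : ℤ)] : Fin 3 → ℂ) i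
        * (![eps m, eps m ^ k, eps m ^ (-k - 1)] : Fin 3 → ℂ) i := by
      funext i
      exact mul_comm _ _
    rw [hF, hG, FM, GM, Matrix.diagonal_mul_diagonal, Matrix.diagonal_mul_diagonal, hd]
  have hcomm : ∀ x y, Commute (φF x) (φG y) := by
    intro x y
    obtain ⟨a, rfl⟩ := hsurjm x
    obtain ⟨b, rfl⟩ := hsurjn y
    rw [hφF, hφG]
    exact hFGcomm.zpow_zpow a b
  set φ : Multiplicative (ZMod m) × Multiplicative (ZMod n) →* SU3 :=
    MonoidHom.noncommCoprod φF φG hcomm with hφdef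
  have hφ_apply : ∀ p, φ p = φF p.1 * φG p.2 := fun p => rfl
  -- injectivity
  have hinj : Function.Injective φ := by
    rw [injective_iff_map_eq_one]
    rintro ⟨x, y⟩ h
    obtain ⟨a, rfl⟩ := hsurjm x
    obtain ⟨b, rfl⟩ := hsurjn y
    rw [hφ_apply, hφF, hφG] at h
    obtain ⟨hma, hnb⟩ := hkey a b h
    have hx : ((a : ZMod m)) = 0 := (ZMod.intCast_zmod_eq_zero_iff_dvd a m).mpr hma
    have hy : ((b : ZMod n)) = 0 := (ZMod.intCast_zmod_eq_zero_iff_dvd b n).mpr hnb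
    rw [Prod.mk_eq_one]
    constructor
    · rw [hx]; rfl
    · rw [hy]; rfl
  -- range equals closure
  have hFmem : F ∈ Subgroup.closure ({F, G} : Set SU3) :=
    Subgroup.subset_closure (Set.mem_insert _ _)
  have hGmem : G ∈ Subgroup.closure ({F, G} : Set SU3) :=
    Subgroup.subset_closure (Set.mem_insert_of_mem _ rfl)
  have hrange : φ.range = Subgroup.closure ({F, G} : Set SU3) := by
    apply le_antisymm
    · rintro z ⟨⟨x, y⟩, rfl⟩
      obtain ⟨a, rfl⟩ := hsurjm x
      obtain ⟨b, rfl⟩ := hsurjn y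
      rw [hφ_apply, hφF, hφG]
      exact mul_mem (Subgroup.zpow_mem _ hFmem a) (Subgroup.zpow_mem _ hGmem b)
    · rw [Subgroup.closure_le]
      rintro z (rfl | rfl)
      · refine ⟨(Multiplicative.ofAdd ((1 : ℤ) : ZMod m), 1), ?_⟩
        rw [hφ_apply]
        show φF _ * φG 1 = z
        rw [hφF, _root_.map_one, mul_one, _root_.zpow_one]
      · refine ⟨(1, Multiplicative.ofAdd ((1 : ℤ) : ZMod n)), ?_⟩
        rw [hφ_apply]
        show φF 1 * φG _ = z
        rw [hφG, _root_.map_one, one_mul, _root_.zpow_one]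
  -- the isomorphism
  have e : (Multiplicative (ZMod m) × Multiplicative (ZMod n)) ≃* φ.range :=
    MonoidHom.ofInjective hinj
  have e2 : (Subgroup.closure ({F, G} : Set SU3)) ≃*
      Multiplicative (ZMod m) × Multiplicative (ZMod n) :=
    (MulEquiv.subgroupCongr hrange.symm).trans e.symm
  refine ⟨hordF, hordG, hinter, ⟨e2⟩, ?_⟩
  rw [Nat.card_congr e2.toEquiv, Nat.card_prod,
    Nat.card_congr (Multiplicative.toAdd (α := ZMod m)),
    Nat.card_congr (Multiplicative.toAdd (α := ZMod n)), Nat.card_zmod, Nat.card_zmod]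

end
end
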